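/- arXiv:2408.09079 — 7 statements merged into one kernel-verified Lean document; each statement's English description precedes it below -/
import Mathlib

section
/- For every fixed i ∈ ℕ and every t ∈ [0,T], lim_{N→∞} Σ_{j=i+1}^{N−1} φ_N^j(t) φ_N^{N+i−j}(t) = 0. -/
open scoped BigOperators

/-- The sequence ε^i : ε^0 = ε, ε^1 = -ε, ε^i = 0 for i ≥ 2 (natural index). -/
noncomputable def epsN (ε : ℝ) : ℕ → ℝ := fun i => if i = 0 then ε else if i = 1 then -ε else 0

/-- The sequence ε^i with integer index. -/
noncomputable def epsZ (ε : ℝ) : ℤ → ℝ := fun i => if i = 0 then ε else if i = 1 then -ε else 0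

/-- `ϕ` is a solution of the infinite Riccati system on `[0,T]`:
`(d/dt) ϕ^i(t) = ∑_{j=0}^i ϕ^j(t) ϕ^{i-j}(t) - ε^i` with terminal conditions
`ϕ^0(T) = c`, `ϕ^1(T) = -c`, `ϕ^i(T) = 0` for `i ≥ 2`. -/
def IsInfRiccatiSol (T ε c : ℝ) (ϕ : ℕ → ℝ → ℝ) : Prop :=
  (∀ i : ℕ, ∀ t ∈ Set.Icc (0:ℝ) T,
    HasDerivWithinAt (ϕ i)
      ((∑ j ∈ Finset.range (i + 1), ϕ j t * ϕ (i - j) t) - epsN ε i)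
      (Set.Icc (0:ℝ) T) t) ∧
  ϕ 0 T = c ∧ ϕ 1 T = -c ∧ ∀ i : ℕ, 2 ≤ i → ϕ i T = 0

/-- `φ` is a solution of the `N`-periodic Riccati system on `[0,T]`:
`φ^{i+N} = φ^i`, `(d/dt) φ^i(t) = ∑_{j=0}^{N-1} φ^j(t) φ^{N+i-j}(t) - ε^i` for
`i = 0,…,N-1`, with terminal conditions `φ^0(T) = c`, `φ^1(T) = -c`, `φ^i(T) = 0`
for `2 ≤ i ≤ N-1`. -/
def IsPerRiccatiSol (T ε c : ℝ) (N : ℕ) (φ : ℤ → ℝ → ℝ) : Prop :=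
  (∀ i : ℤ, φ (i + (N : ℤ)) = φ i) ∧
  (∀ i : ℕ, i < N → ∀ t ∈ Set.Icc (0:ℝ) T,
    HasDerivWithinAt (φ (i : ℤ))
      ((∑ j ∈ Finset.range N, φ (j : ℤ) t * φ ((N : ℤ) + (i : ℤ) - (j : ℤ)) t) - epsZ ε (i : ℤ))
      (Set.Icc (0:ℝ) T) t) ∧
  φ 0 T = c ∧ φ 1 T = -c ∧ ∀ i : ℕ, 2 ≤ i → i < N → φ (i : ℤ) T = 0

open Set Filter

set_option maxHeartbeats 1000000


lemma posPartSq_hasDerivAt (v : ℝ) : HasDerivAt (fun u : ℝ => max u 0 ^ 2) (2 * max v 0) v := by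
  rcases lt_trichotomy v 0 with hv | hv | hv
  · have h0 : (fun u : ℝ => max u 0 ^ 2) =ᶠ[nhds v] fun _ => (0:ℝ) := by
      filter_upwards [Iio_mem_nhds hv] with u hu
      have : u ≤ 0 := le_of_lt hu
      simp [max_eq_right this]
    have h1 : HasDerivAt (fun _ : ℝ => (0:ℝ)) 0 v := hasDerivAt_const v 0
    have h2 := h1.congr_of_eventuallyEq h0
    simpa [max_eq_right hv.le] using h2
  · subst hv
    rw [hasDerivAt_iff_isLittleO, Asymptotics.isLittleO_iff]
    intro c hc
    filter_upwards [Metric.ball_mem_nhds (0:ℝ) hc] with u hu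
    have h1 : |u| < c := by simpa [Real.dist_eq] using hu
    have h2 : max u 0 ^ 2 ≤ |u| * |u| := by
      rcases le_or_gt u 0 with h | h
      · simp only [max_eq_right h]; nlinarith [abs_nonneg u]
      · rw [max_eq_left h.le, abs_of_pos h]; nlinarith
    have h3 : (0:ℝ) ≤ max u 0 ^ 2 := by positivity
    rw [Real.norm_eq_abs, Real.norm_eq_abs]
    have e1 : max u 0 ^ 2 - max (0:ℝ) 0 ^ 2 - (u - 0) • (2 * max (0:ℝ) 0) = max u 0 ^ 2 := by
      simp
    rw [e1, abs_of_nonneg h3]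
    have : |u - 0| = |u| := by simp
    rw [this]
    nlinarith [abs_nonneg u]
  · have h0 : (fun u : ℝ => max u 0 ^ 2) =ᶠ[nhds v] fun u => u ^ 2 := by
      filter_upwards [Ioi_mem_nhds hv] with u hu
      have : (0:ℝ) ≤ u := le_of_lt hu
      simp [max_eq_left this]
    have h1 : HasDerivAt (fun u : ℝ => u ^ 2) (2 * v) v := by
      simpa using hasDerivAt_pow 2 v
    have h2 := h1.congr_of_eventuallyEq h0
    simpa [max_eq_left hv.le] using h2


lemma gronwall_le {f f' : ℝ → ℝ} {δ K ε a b : ℝ}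
    (hf : ∀ x ∈ Icc a b, HasDerivWithinAt f (f' x) (Icc a b) x)
    (ha : f a ≤ δ) (bound : ∀ x ∈ Ico a b, f' x ≤ K * f x + ε) :
    ∀ x ∈ Icc a b, f x ≤ gronwallBound δ K ε (x - a) := by
  have hcont : ContinuousOn f (Icc a b) := fun x hx => (hf x hx).continuousWithinAt
  refine le_gronwallBound_of_liminf_deriv_right_le hcont ?_ ha bound
  intro x hx r hr
  have hx' : x ∈ Icc a b := ⟨hx.1, hx.2.le⟩
  have hIci : HasDerivWithinAt f (f' x) (Ici x) x :=
    (hf x hx').mono_of_mem_nhdsWithin (Icc_mem_nhdsGE_of_mem hx)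
  have := hIci.liminf_right_slope_le hr
  apply this.mono
  intro z hz
  simpa [slope_def_field, div_eq_inv_mul] using hz


section PerN
variable {T ε c : ℝ} {N : ℕ} {φ : ℤ → ℝ → ℝ}

lemma per_nat (hper : ∀ i : ℤ, φ (i + (N:ℤ)) = φ i) (a : ℕ) :
    φ (((a + N : ℕ)) : ℤ) = φ (a : ℤ) := by
  have := hper (a : ℤ); push_cast; exact this

lemma mod_reduce (hper : ∀ i : ℤ, φ (i + (N:ℤ)) = φ i) (hN : 0 < N) :
    ∀ u : ℕ, φ (u : ℤ) = φ ((u % N : ℕ) : ℤ) := by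
  intro u
  induction u using Nat.strong_induction_on with
  | _ u ih =>
    by_cases h : u < N
    · rw [Nat.mod_eq_of_lt h]
    · push_neg at h
      obtain ⟨v, rfl⟩ : ∃ v, u = v + N := ⟨u - N, by omega⟩
      rw [per_nat hper v, ih v (by omega), Nat.add_mod_right]

lemma deriv_nat (h : IsPerRiccatiSol T ε c N φ) {a : ℕ} (ha : a < N) {t : ℝ} (ht : t ∈ Icc (0:ℝ) T) :
    HasDerivWithinAt (φ (a : ℤ))
      ((∑ j ∈ Finset.range N, φ (j:ℤ) t * φ (((N + a - j : ℕ)) : ℤ) t) - epsN ε a)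
      (Icc (0:ℝ) T) t := by
  have h0 := h.2.1 a ha t ht
  have e1 : ∑ j ∈ Finset.range N, φ (j:ℤ) t * φ ((N:ℤ) + (a:ℤ) - (j:ℤ)) t
      = ∑ j ∈ Finset.range N, φ (j:ℤ) t * φ (((N + a - j : ℕ)) : ℤ) t := by
    refine Finset.sum_congr rfl fun j hj => ?_
    have hj' : j < N := Finset.mem_range.mp hj
    have : ((N + a - j : ℕ) : ℤ) = (N:ℤ) + (a:ℤ) - (j:ℤ) := by
      push_cast [Nat.cast_sub (by omega : j ≤ N + a)]; ring
    rw [this]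
  have e2 : epsZ ε (a : ℤ) = epsN ε a := by
    simp only [epsZ, epsN, Nat.cast_eq_zero, Nat.cast_eq_one]
  rw [e1, e2] at h0; exact h0

lemma bound_exists (h : IsPerRiccatiSol T ε c N φ) :
    ∃ B : ℝ, 0 ≤ B ∧ ∀ a : ℕ, a < N → ∀ t ∈ Icc (0:ℝ) T, |φ (a:ℤ) t| ≤ B := by
  have hc : ∀ a : ℕ, ∃ C : ℝ, ∀ t ∈ Icc (0:ℝ) T, a < N → |φ (a:ℤ) t| ≤ C := by
    intro a
    by_cases ha : a < N
    · have hcont : ContinuousOn (φ (a:ℤ)) (Icc (0:ℝ) T) := fun t ht =>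
        (h.2.1 a ha t ht).continuousWithinAt
      obtain ⟨C, hC⟩ := (isCompact_Icc).exists_bound_of_continuousOn hcont
      exact ⟨C, fun t ht _ => by simpa using hC t ht⟩
    · exact ⟨0, fun t ht ha' => absurd ha' ha⟩
  choose C hC using hc
  refine ⟨∑ a ∈ Finset.range N, |C a|, Finset.sum_nonneg fun _ _ => abs_nonneg _, ?_⟩
  intro a ha t ht
  calc |φ (a:ℤ) t| ≤ C a := hC a t ht ha
    _ ≤ |C a| := le_abs_self _
    _ ≤ ∑ b ∈ Finset.range N, |C b| :=
        Finset.single_le_sum (fun b _ => abs_nonneg (C b)) (Finset.mem_range.mpr ha)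

lemma rev_deriv {T : ℝ} {F : ℝ → ℝ} {d s : ℝ} (hs : s ∈ Icc (0:ℝ) T)
    (hF : HasDerivWithinAt F d (Icc (0:ℝ) T) (T - s)) :
    HasDerivWithinAt (fun u => F (T - u)) (-d) (Icc (0:ℝ) T) s := by
  have hmap : MapsTo (fun u : ℝ => T - u) (Icc (0:ℝ) T) (Icc (0:ℝ) T) := fun u hu =>
    ⟨by simp at hu ⊢; linarith [hu.2], by simp at hu ⊢; linarith [hu.1]⟩
  have hid : HasDerivWithinAt (fun u : ℝ => T - u) (-1) (Icc (0:ℝ) T) s := by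
    simpa using (hasDerivWithinAt_id s (Icc (0:ℝ) T)).const_sub T
  have := hF.comp s hid hmap
  simpa [mul_comm, Function.comp_def] using this

lemma shift_sum (hper : ∀ i : ℤ, φ (i + (N:ℤ)) = φ i) (t : ℝ) :
    ∀ d : ℕ, ∑ k ∈ Finset.range N, φ ((d + k : ℕ) : ℤ) t = ∑ k ∈ Finset.range N, φ (k:ℤ) t := by
  intro d
  induction d with
  | zero => simp
  | succ d ih =>
    have e1 : ∑ k ∈ Finset.range N, φ ((d + 1 + k : ℕ) : ℤ) t
        = ∑ k ∈ Finset.range N, φ ((d + (k + 1) : ℕ) : ℤ) t := by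
      refine Finset.sum_congr rfl fun k _ => ?_
      have : d + 1 + k = d + (k + 1) := by omega
      rw [this]
    have e2 := Finset.sum_range_succ' (fun k => φ ((d + k : ℕ) : ℤ) t) N
    have e3 := Finset.sum_range_succ (fun k => φ ((d + k : ℕ) : ℤ) t) N
    beta_reduce at e2 e3
    have e4 : φ ((d + N : ℕ) : ℤ) t = φ ((d + 0 : ℕ) : ℤ) t := by
      have := per_nat hper d
      simpa using congrFun this t
    rw [e1]
    have : ∑ k ∈ Finset.range N, φ ((d + (k + 1) : ℕ) : ℤ) t
        = ∑ k ∈ Finset.range N, φ ((d + k : ℕ) : ℤ) t := by linarith [e2, e3, e4]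
    rw [this]
    simpa using ih
end PerN


lemma eps_sum {N : ℕ} (hN : 2 ≤ N) (x : ℝ) : ∑ k ∈ Finset.range N, epsN x k = 0 := by
  have h1 : ∑ k ∈ Finset.range 2, epsN x k = ∑ k ∈ Finset.range N, epsN x k := by
    refine Finset.sum_subset (Finset.range_subset_range.mpr hN) ?_
    intro k _ hk
    simp only [Finset.mem_range] at hk
    push_neg at hk
    simp only [epsN]; rw [if_neg (by omega), if_neg (by omega)]
  rw [← h1]
  simp [Finset.sum_range_succ, epsN]


section PerN2
variable {T ε c : ℝ} {N : ℕ} {φ : ℤ → ℝ → ℝ}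

lemma conv_total (hper : ∀ i : ℤ, φ (i + (N:ℤ)) = φ i) (t : ℝ) :
    ∑ k ∈ Finset.range N, ∑ j ∈ Finset.range N, φ (j:ℤ) t * φ ((N + k - j : ℕ) : ℤ) t
      = (∑ k ∈ Finset.range N, φ (k:ℤ) t) ^ 2 := by
  rw [Finset.sum_comm]
  have e1 : ∀ j ∈ Finset.range N,
      ∑ k ∈ Finset.range N, φ (j:ℤ) t * φ ((N + k - j : ℕ) : ℤ) t
        = φ (j:ℤ) t * ∑ k ∈ Finset.range N, φ (k:ℤ) t := by
    intro j hj
    have hj' : j < N := Finset.mem_range.mp hj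
    rw [← Finset.mul_sum]
    congr 1
    have e2 : ∀ k ∈ Finset.range N, φ ((N + k - j : ℕ) : ℤ) t = φ (((N - j) + k : ℕ) : ℤ) t := by
      intro k _
      have : N + k - j = (N - j) + k := by omega
      rw [this]
    rw [Finset.sum_congr rfl e2, shift_sum hper t (N - j)]
  rw [Finset.sum_congr rfl e1, ← Finset.sum_mul, sq]

lemma term_sum (h : IsPerRiccatiSol T ε c N φ) (hN : 2 ≤ N) :
    ∑ k ∈ Finset.range N, φ (k:ℤ) T = 0 := by
  have e1 : ∀ k ∈ Finset.range N, φ (k:ℤ) T = epsN c k := by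
    intro k hk
    have hk' : k < N := Finset.mem_range.mp hk
    rcases Nat.lt_or_ge k 2 with h2 | h2
    · interval_cases k
      · simpa [epsN] using h.2.2.1
      · simpa [epsN] using h.2.2.2.1
    · rw [h.2.2.2.2 k h2 hk']
      simp only [epsN]
      rw [if_neg (by omega), if_neg (by omega)]
  rw [Finset.sum_congr rfl e1, eps_sum hN]

lemma sum_zero (h : IsPerRiccatiSol T ε c N φ) (hN : 2 ≤ N) (hT : 0 < T) :
    ∀ t ∈ Icc (0:ℝ) T, ∑ k ∈ Finset.range N, φ (k:ℤ) t = 0 := by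
  obtain ⟨B, hB0, hB⟩ := bound_exists h
  set σ : ℝ → ℝ := fun t => ∑ k ∈ Finset.range N, φ (k:ℤ) t with hσ
  have hσd : ∀ t ∈ Icc (0:ℝ) T, HasDerivWithinAt σ (σ t ^ 2) (Icc (0:ℝ) T) t := by
    intro t ht
    have h1 : HasDerivWithinAt σ
        (∑ k ∈ Finset.range N,
          ((∑ j ∈ Finset.range N, φ (j:ℤ) t * φ ((N + k - j : ℕ) : ℤ) t) - epsN ε k))
        (Icc (0:ℝ) T) t :=
      HasDerivWithinAt.fun_sum fun k hk => deriv_nat h (Finset.mem_range.mp hk) ht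
    have e : (∑ k ∈ Finset.range N,
          ((∑ j ∈ Finset.range N, φ (j:ℤ) t * φ ((N + k - j : ℕ) : ℤ) t) - epsN ε k))
        = σ t ^ 2 := by
      rw [Finset.sum_sub_distrib, eps_sum hN, conv_total h.1 t, sub_zero]
    rwa [e] at h1
  have hσb : ∀ t ∈ Icc (0:ℝ) T, |σ t| ≤ N * B := by
    intro t ht
    calc |σ t| ≤ ∑ k ∈ Finset.range N, |φ (k:ℤ) t| := Finset.abs_sum_le_sum_abs _ _
      _ ≤ ∑ k ∈ Finset.range N, B :=
          Finset.sum_le_sum fun k hk => hB k (Finset.mem_range.mp hk) t ht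
      _ = N * B := by rw [Finset.sum_const, Finset.card_range, nsmul_eq_mul]
  -- reversed squared function
  set f : ℝ → ℝ := fun s => σ (T - s) ^ 2 with hf
  have hfd : ∀ s ∈ Icc (0:ℝ) T, HasDerivWithinAt f
      (-(2 * σ (T - s) ^ 1 * σ (T - s) ^ 2)) (Icc (0:ℝ) T) s := by
    intro s hs
    have hts : T - s ∈ Icc (0:ℝ) T := ⟨by simp at hs ⊢; linarith [hs.2], by simp at hs ⊢; linarith [hs.1]⟩
    have h1 : HasDerivWithinAt (fun t => σ t ^ 2) (2 * σ (T - s) ^ 1 * σ (T - s) ^ 2)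
        (Icc (0:ℝ) T) (T - s) := (hσd _ hts).pow 2
    exact rev_deriv hs h1
  have hf0 : f 0 ≤ 0 := by
    simp only [hf, sub_zero]
    rw [show σ T = 0 from term_sum h hN]
    simp
  have hbound : ∀ s ∈ Ico (0:ℝ) T, -(2 * σ (T - s) ^ 1 * σ (T - s) ^ 2) ≤ (2 * (N * B)) * f s + 0 := by
    intro s hs
    have hts : T - s ∈ Icc (0:ℝ) T := ⟨by linarith [hs.2.le], by linarith [hs.1]⟩
    have h1 := hσb _ hts
    have h2 : (0:ℝ) ≤ σ (T - s) ^ 2 := sq_nonneg _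
    have h3 : -σ (T - s) ≤ |σ (T - s)| := neg_le_abs _
    simp only [hf, pow_one, add_zero]
    nlinarith [abs_nonneg (σ (T - s))]
  have := gronwall_le hfd hf0 hbound
  intro t ht
  have hs : T - t ∈ Icc (0:ℝ) T := ⟨by linarith [ht.2], by linarith [ht.1]⟩
  have h4 := this (T - t) hs
  rw [gronwallBound_ε0_δ0] at h4
  have h5 : f (T - t) = σ t ^ 2 := by simp [hf]
  rw [h5] at h4
  have := sq_nonneg (σ t)
  have h6 : σ t ^ 2 = 0 := le_antisymm h4 this
  exact pow_eq_zero_iff (by norm_num) |>.mp h6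
end PerN2

section Signs
variable {T ε c : ℝ} {N : ℕ} {φ : ℤ → ℝ → ℝ}

lemma mul_ge_aux {u v B : ℝ} (hu : |u| ≤ B) (hv : |v| ≤ B) :
    -(B * max u 0) - B * max v 0 ≤ u * v := by
  have hu' := abs_le.mp hu
  have hv' := abs_le.mp hv
  rcases le_or_gt u 0 with h1 | h1 <;> rcases le_or_gt v 0 with h2 | h2
  · rw [max_eq_right h1, max_eq_right h2]; nlinarith
  · rw [max_eq_right h1, max_eq_left h2.le]; nlinarith
  · rw [max_eq_left h1.le, max_eq_right h2]; nlinarith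
  · rw [max_eq_left h1.le, max_eq_left h2.le]; nlinarith

lemma signs (h : IsPerRiccatiSol T ε c N φ) (hN : 2 ≤ N) (hT : 0 < T) (hε : 0 < ε)
    (hc : 0 ≤ c) :
    ∀ a : ℕ, 1 ≤ a → a < N → ∀ t ∈ Icc (0:ℝ) T, φ (a:ℤ) t ≤ 0 := by
  obtain ⟨B, hB0, hB⟩ := bound_exists h
  set D : ℕ → ℝ → ℝ := fun k t =>
    (∑ j ∈ Finset.range N, φ (j:ℤ) t * φ ((N + k - j : ℕ) : ℤ) t) - epsN ε k with hD
  set p : ℕ → ℝ → ℝ := fun a t => max (φ (a:ℤ) t) 0 with hp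
  set W : ℝ → ℝ := fun s => ∑ k ∈ Finset.Ico 1 N, p k (T - s) ^ 2 with hW
  set W' : ℝ → ℝ := fun s => ∑ k ∈ Finset.Ico 1 N, -(2 * p k (T - s) * D k (T - s)) with hW'
  have hmem : ∀ {s : ℝ}, s ∈ Icc (0:ℝ) T → T - s ∈ Icc (0:ℝ) T := by
    intro s hs
    exact ⟨by linarith [hs.2], by linarith [hs.1]⟩
  have hWd : ∀ s ∈ Icc (0:ℝ) T, HasDerivWithinAt W (W' s) (Icc (0:ℝ) T) s := by
    intro s hs
    refine HasDerivWithinAt.fun_sum fun k hk => ?_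
    have hk' := Finset.mem_Ico.mp hk
    have h1 : HasDerivWithinAt (fun t => p k t ^ 2) (2 * p k (T - s) * D k (T - s))
        (Icc (0:ℝ) T) (T - s) := by
      have h2 : HasDerivWithinAt (φ (k:ℤ)) (D k (T - s)) (Icc (0:ℝ) T) (T - s) :=
        deriv_nat h hk'.2 (hmem hs)
      exact (posPartSq_hasDerivAt (φ (k:ℤ) (T - s))).comp_hasDerivWithinAt (T - s) h2
    exact rev_deriv hs h1
  have hW0 : W 0 ≤ 0 := by
    have e : ∀ k ∈ Finset.Ico 1 N, p k (T - 0) ^ 2 = 0 := by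
      intro k hk
      have hk' := Finset.mem_Ico.mp hk
      have hterm : φ (k:ℤ) T ≤ 0 := by
        rcases Nat.lt_or_ge k 2 with h2 | h2
        · have : k = 1 := by omega
          subst this
          rw [show ((1:ℕ):ℤ) = 1 by norm_num, h.2.2.2.1]
          linarith
        · rw [h.2.2.2.2 k h2 hk'.2]
      simp only [hp, sub_zero]
      rw [max_eq_right hterm]
      norm_num
    rw [hW]
    simp only [Finset.sum_congr rfl e, Finset.sum_const_zero]
    exact le_refl 0
  have hbound : ∀ s ∈ Ico (0:ℝ) T, W' s ≤ (4 * N * B * N) * W s + 0 := by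
    intro s hs
    have hts : T - s ∈ Icc (0:ℝ) T := hmem ⟨hs.1, hs.2.le⟩
    set t := T - s with htdef
    set P : ℝ := ∑ k ∈ Finset.Ico 1 N, p k t with hPdef
    have hp_nonneg : ∀ a : ℕ, 0 ≤ p a t := fun a => le_max_right _ _
    have hP0 : 0 ≤ P := Finset.sum_nonneg fun k _ => hp_nonneg k
    have hPk : ∀ a : ℕ, 1 ≤ a → a < N → p a t ≤ P := fun a h1 h2 =>
      Finset.single_le_sum (fun k _ => hp_nonneg k) (Finset.mem_Ico.mpr ⟨h1, h2⟩)
    -- core termwise bound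
    have hcore : ∀ k ∈ Finset.Ico 1 N,
        -(2 * p k t * D k t) ≤ (4 * N * B) * (p k t * P) := by
      intro k hk
      have hk' := Finset.mem_Ico.mp hk
      rcases le_or_gt (φ (k:ℤ) t) 0 with hxk | hxk
      · have : p k t = 0 := max_eq_right hxk
        rw [this]
        norm_num
      · have hpk : p k t = φ (k:ℤ) t := max_eq_left hxk.le
        have heps : epsN ε k ≤ 0 := by
          simp only [epsN]
          rw [if_neg (by omega)]
          by_cases h1 : k = 1 <;> simp [h1] <;> linarith
        -- conv lower bound
        have hconv : -(2 * B * P) * N ≤ ∑ j ∈ Finset.range N, φ (j:ℤ) t * φ ((N + k - j : ℕ) : ℤ) t := by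
          have hterm : ∀ j ∈ Finset.range N,
              -(2 * B * P) ≤ φ (j:ℤ) t * φ ((N + k - j : ℕ) : ℤ) t := by
            intro j hj
            have hj' : j < N := Finset.mem_range.mp hj
            have hNpos : 0 < N := by omega
            have hmod : φ ((N + k - j : ℕ) : ℤ) t = φ (((N + k - j) % N : ℕ) : ℤ) t := by
              rw [← mod_reduce h.1 hNpos (N + k - j)]
            set b := (N + k - j) % N with hbdef
            have hbN : b < N := Nat.mod_lt _ hNpos
            rcases Nat.eq_zero_or_pos j with hj0 | hj0
            · -- j = 0, b = k
              subst hj0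
              have hbk : b = k := by
                rw [hbdef, Nat.sub_zero, Nat.add_mod_left, Nat.mod_eq_of_lt hk'.2]
              rw [hmod, hbk]
              have h1 : -B ≤ φ ((0:ℕ):ℤ) t := by
                have := abs_le.mp (hB 0 (by omega) t hts)
                exact this.1
              have h2 : φ ((0:ℕ):ℤ) t * φ ((k:ℕ):ℤ) t ≥ -B * φ ((k:ℕ):ℤ) t := by
                nlinarith
              have h3 : -B * φ ((k:ℕ):ℤ) t = -(B * p k t) := by rw [hpk]; ring
              have h4 : p k t ≤ P := hPk k hk'.1 hk'.2
              nlinarith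
            · rcases Nat.eq_zero_or_pos b with hb0 | hb0
              · -- b = 0 means j = k
                have hjk : j = k := by
                  rw [hbdef] at hb0
                  rcases le_or_gt j k with hle | hlt
                  · have hu1 : N ≤ N + k - j := by omega
                    have hu2 : N + k - j - N < N := by omega
                    rw [Nat.mod_eq_sub_mod hu1, Nat.mod_eq_of_lt hu2] at hb0
                    omega
                  · have hu : N + k - j < N := by omega
                    rw [Nat.mod_eq_of_lt hu] at hb0
                    omega
                subst hjk
                rw [hmod, hb0]
                have h1 : -B ≤ φ ((0:ℕ):ℤ) t := (abs_le.mp (hB 0 (by omega) t hts)).1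
                have h2 : φ ((j:ℕ):ℤ) t * φ ((0:ℕ):ℤ) t ≥ φ ((j:ℕ):ℤ) t * (-B) := by
                  nlinarith
                have h4 : p j t ≤ P := hPk j hk'.1 hk'.2
                rw [hpk] at h4
                nlinarith
              · -- both ≥ 1
                rw [hmod]
                have h1 := mul_ge_aux (hB j hj' t hts) (hB b hbN t hts)
                have h2 : max (φ ((j:ℕ):ℤ) t) 0 ≤ P := hPk j hj0 hj'
                have h3 : max (φ ((b:ℕ):ℤ) t) 0 ≤ P := hPk b hb0 hbN
                nlinarith
          calc -(2 * B * P) * N = ∑ _j ∈ Finset.range N, -(2 * B * P) := by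
                rw [Finset.sum_const, Finset.card_range, nsmul_eq_mul]; ring
            _ ≤ _ := Finset.sum_le_sum hterm
        have hDlow : -(2 * B * P * N) ≤ D k t := by
          rw [hD]
          simp only []
          nlinarith
        have hpk0 : 0 ≤ p k t := hp_nonneg k
        nlinarith
    have hstep : W' s ≤ (4 * N * B) * (P * P) := by
      rw [hW']
      calc ∑ k ∈ Finset.Ico 1 N, -(2 * p k (T - s) * D k (T - s))
          ≤ ∑ k ∈ Finset.Ico 1 N, (4 * N * B) * (p k t * P) := Finset.sum_le_sum hcore
        _ = (4 * N * B) * (P * P) := by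
            rw [← Finset.mul_sum, ← Finset.sum_mul]
    have hcs : P * P ≤ N * W s := by
      have h1 : P ^ 2 ≤ (Finset.Ico 1 N).card * ∑ k ∈ Finset.Ico 1 N, p k t ^ 2 :=
        sq_sum_le_card_mul_sum_sq
      have h2 : ((Finset.Ico 1 N).card : ℝ) ≤ N := by
        rw [Nat.card_Ico]
        exact_mod_cast Nat.sub_le N 1
      have h3 : 0 ≤ ∑ k ∈ Finset.Ico 1 N, p k t ^ 2 :=
        Finset.sum_nonneg fun k _ => sq_nonneg _
      have h4 : W s = ∑ k ∈ Finset.Ico 1 N, p k t ^ 2 := rfl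
      rw [h4, ← sq]
      nlinarith
    have hWs0 : 0 ≤ W s := Finset.sum_nonneg fun k _ => sq_nonneg _
    calc W' s ≤ (4 * N * B) * (P * P) := hstep
      _ ≤ (4 * N * B) * (N * W s) := by
          have : (0:ℝ) ≤ 4 * N * B := by positivity
          nlinarith
      _ = (4 * N * B * N) * W s + 0 := by ring
  have hgron := gronwall_le hWd hW0 hbound
  intro a ha1 haN t ht
  have hs : T - t ∈ Icc (0:ℝ) T := ⟨by linarith [ht.2], by linarith [ht.1]⟩
  have h4 := hgron (T - t) hs
  rw [gronwallBound_ε0_δ0] at h4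
  have hW_eq : W (T - t) = ∑ k ∈ Finset.Ico 1 N, p k t ^ 2 := by
    simp only [hW]
    rw [show T - (T - t) = t by ring]
  rw [hW_eq] at h4
  have h5 : ∑ k ∈ Finset.Ico 1 N, p k t ^ 2 = 0 :=
    le_antisymm h4 (Finset.sum_nonneg fun k _ => sq_nonneg _)
  have h6 := (Finset.sum_eq_zero_iff_of_nonneg fun k _ => sq_nonneg (p k t)).mp h5
  have h7 := h6 a (Finset.mem_Ico.mpr ⟨ha1, haN⟩)
  have h8 : p a t = 0 := by
    have := sq_eq_zero_iff.mp h7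
    exact this
  have h9 : φ (a:ℤ) t ≤ max (φ (a:ℤ) t) 0 := le_max_left _ _
  rw [show max (φ (a:ℤ) t) 0 = p a t from rfl, h8] at h9
  exact h9
end Signs

section Bounds
variable {T ε c : ℝ} {N : ℕ} {φ : ℤ → ℝ → ℝ}

lemma x0_bound (h : IsPerRiccatiSol T ε c N φ) (hN : 2 ≤ N) (hT : 0 < T) (hε : 0 < ε)
    (hc : 0 ≤ c) :
    ∀ t ∈ Icc (0:ℝ) T, φ ((0:ℕ):ℤ) t ≤ c + ε * T := by
  have hsigns := signs h hN hT hε hc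
  have hmem : ∀ {s : ℝ}, s ∈ Icc (0:ℝ) T → T - s ∈ Icc (0:ℝ) T := fun hs =>
    ⟨by linarith [hs.2], by linarith [hs.1]⟩
  set D : ℕ → ℝ → ℝ := fun k t =>
    (∑ j ∈ Finset.range N, φ (j:ℤ) t * φ ((N + k - j : ℕ) : ℤ) t) - epsN ε k with hD
  set v : ℝ → ℝ := fun s => φ ((0:ℕ):ℤ) (T - s) with hv
  set v' : ℝ → ℝ := fun s => -(D 0 (T - s)) with hv'
  have hvd : ∀ s ∈ Icc (0:ℝ) T, HasDerivWithinAt v (v' s) (Icc (0:ℝ) T) s := by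
    intro s hs
    exact rev_deriv hs (deriv_nat h (by omega) (hmem hs))
  have hv0 : v 0 ≤ c := by
    simp only [hv, sub_zero, Nat.cast_zero]
    rw [h.2.2.1]
  have hbound : ∀ s ∈ Ico (0:ℝ) T, v' s ≤ 0 * v s + ε := by
    intro s hs
    have hts : T - s ∈ Icc (0:ℝ) T := hmem ⟨hs.1, hs.2.le⟩
    set t := T - s with htdef
    have hconv : 0 ≤ ∑ j ∈ Finset.range N, φ (j:ℤ) t * φ ((N + 0 - j : ℕ) : ℤ) t := by
      refine Finset.sum_nonneg fun j hj => ?_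
      have hj' : j < N := Finset.mem_range.mp hj
      rcases Nat.eq_zero_or_pos j with hj0 | hj0
      · subst hj0
        have e1 : N + 0 - 0 = 0 + N := by omega
        rw [e1, per_nat h.1 0]
        exact mul_self_nonneg _
      · have e1 : 1 ≤ N + 0 - j := by omega
        have e2 : N + 0 - j < N := by omega
        have h1 := hsigns j hj0 hj' t hts
        have h2 := hsigns (N + 0 - j) e1 e2 t hts
        nlinarith
    have e3 : epsN ε 0 = ε := by simp [epsN]
    simp only [hv', hv, hD]
    rw [e3]
    simp only [zero_mul, zero_add]
    linarith
  have hgron := gronwall_le hvd hv0 hbound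
  intro t ht
  have hs : T - t ∈ Icc (0:ℝ) T := hmem ht
  have h4 := hgron (T - t) hs
  rw [gronwallBound_K0] at h4
  simp only [hv, show T - (T - t) = t by ring, sub_zero] at h4
  have : ε * (T - t) ≤ ε * T := by nlinarith [ht.1]
  linarith

lemma wshift (hper : ∀ i : ℤ, φ (i + (N:ℤ)) = φ i) (t : ℝ)
    (hS0 : ∑ k ∈ Finset.range N, φ (k:ℤ) t = 0) :
    ∀ d : ℕ, ∑ k ∈ Finset.range N, (k:ℝ) * φ ((d + k : ℕ) : ℤ) t
      = (∑ k ∈ Finset.range N, (k:ℝ) * φ (k:ℤ) t)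
        + N * ∑ e ∈ Finset.range d, φ (e:ℤ) t := by
  intro d
  induction d with
  | zero => simp
  | succ d ih =>
    have key : ∑ k ∈ Finset.range N, (k:ℝ) * φ ((d + 1 + k : ℕ) : ℤ) t
        = (∑ k ∈ Finset.range N, (k:ℝ) * φ ((d + k : ℕ) : ℤ) t) + N * φ (d:ℤ) t := by
      set g : ℕ → ℝ := fun j => ((j:ℝ) - 1) * φ ((d + j : ℕ) : ℤ) t with hg
      have e1 : ∑ k ∈ Finset.range N, (k:ℝ) * φ ((d + 1 + k : ℕ) : ℤ) t
          = ∑ k ∈ Finset.range N, g (k + 1) := by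
        refine Finset.sum_congr rfl fun k _ => ?_
        simp only [hg]
        rw [show d + 1 + k = d + (k + 1) by omega]
        push_cast
        ring
      have e2 := Finset.sum_range_succ' g N
      have e3 := Finset.sum_range_succ g N
      have e4 : g 0 = -(φ (d:ℤ) t) := by
        simp only [hg, Nat.add_zero, Nat.cast_zero]
        ring
      have e5 : g N = ((N:ℝ) - 1) * φ (d:ℤ) t := by
        simp only [hg]
        rw [show φ ((d + N : ℕ) : ℤ) t = φ (d:ℤ) t from congrFun (per_nat hper d) t]
      have e6 : ∑ j ∈ Finset.range N, g j
          = (∑ j ∈ Finset.range N, (j:ℝ) * φ ((d + j : ℕ) : ℤ) t)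
            - ∑ j ∈ Finset.range N, φ ((d + j : ℕ) : ℤ) t := by
        rw [← Finset.sum_sub_distrib]
        refine Finset.sum_congr rfl fun j _ => ?_
        simp only [hg]
        ring
      have e7 : ∑ j ∈ Finset.range N, φ ((d + j : ℕ) : ℤ) t = 0 := by
        rw [shift_sum hper t d, hS0]
      rw [e1]
      rw [e7] at e6
      linarith [e2, e3]
    rw [key, ih, Finset.sum_range_succ]
    ring
end Bounds

section Moment
variable {T ε c : ℝ} {N : ℕ} {φ : ℤ → ℝ → ℝ}

lemma moment_bound (h : IsPerRiccatiSol T ε c N φ) (hN : 2 ≤ N) (hT : 0 < T) (hε : 0 < ε)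
    (hc : 0 ≤ c) :
    ∀ t ∈ Icc (0:ℝ) T, ∑ k ∈ Finset.range N, (k:ℝ) * (-(φ (k:ℤ) t)) ≤ c + ε * T := by
  have hsigns := signs h hN hT hε hc
  have hsz := sum_zero h hN hT
  have hmem : ∀ {s : ℝ}, s ∈ Icc (0:ℝ) T → T - s ∈ Icc (0:ℝ) T := fun hs =>
    ⟨by linarith [hs.2], by linarith [hs.1]⟩
  set D : ℕ → ℝ → ℝ := fun k t =>
    (∑ j ∈ Finset.range N, φ (j:ℤ) t * φ ((N + k - j : ℕ) : ℤ) t) - epsN ε k with hD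
  set m : ℝ → ℝ := fun s => ∑ k ∈ Finset.range N, (k:ℝ) * (-(φ (k:ℤ) (T - s))) with hm
  set m' : ℝ → ℝ := fun s => -(∑ k ∈ Finset.range N, (k:ℝ) * (-(D k (T - s)))) with hm'
  have hmd : ∀ s ∈ Icc (0:ℝ) T, HasDerivWithinAt m (m' s) (Icc (0:ℝ) T) s := by
    intro s hs
    have hF : HasDerivWithinAt (fun t => ∑ k ∈ Finset.range N, (k:ℝ) * (-(φ (k:ℤ) t)))
        (∑ k ∈ Finset.range N, (k:ℝ) * (-(D k (T - s)))) (Icc (0:ℝ) T) (T - s) := by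
      refine HasDerivWithinAt.fun_sum fun k hk => ?_
      exact ((deriv_nat h (Finset.mem_range.mp hk) (hmem hs)).neg).const_mul ((k:ℝ))
    exact rev_deriv hs hF
  have hm0 : m 0 ≤ c := by
    have e : ∀ k ∈ Finset.range N, (k:ℝ) * (-(φ (k:ℤ) (T - 0))) = if k = 1 then c else 0 := by
      intro k hk
      have hk' : k < N := Finset.mem_range.mp hk
      rw [sub_zero]
      rcases Nat.lt_or_ge k 2 with h2 | h2
      · interval_cases k
        · simp
        · simp only [Nat.cast_one, one_mul]
          rw [h.2.2.2.1]
          simp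
      · rw [h.2.2.2.2 k h2 hk', if_neg (by omega)]
        ring
    rw [hm]
    simp only []
    rw [Finset.sum_congr rfl e, Finset.sum_ite_eq' (Finset.range N) 1 (fun _ => c),
      if_pos (Finset.mem_range.mpr (by omega))]
  have hbound : ∀ s ∈ Ico (0:ℝ) T, m' s ≤ 0 * m s + ε := by
    intro s hs
    have hts : T - s ∈ Icc (0:ℝ) T := hmem ⟨hs.1, hs.2.le⟩
    set t := T - s with htdef
    have heps : ∑ k ∈ Finset.range N, (k:ℝ) * epsN ε k = -ε := by
      have e : ∀ k ∈ Finset.range N, (k:ℝ) * epsN ε k = if k = 1 then -ε else 0 := by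
        intro k _
        rcases Nat.lt_or_ge k 2 with h2 | h2
        · interval_cases k
          · simp
          · simp [epsN]
        · have hk1 : k ≠ 1 := by omega
          have hk0 : k ≠ 0 := by omega
          simp [epsN, hk0, hk1]
      rw [Finset.sum_congr rfl e, Finset.sum_ite_eq' (Finset.range N) 1 (fun _ => -ε),
        if_pos (Finset.mem_range.mpr (by omega))]
    have hconv : ∑ k ∈ Finset.range N, (k:ℝ) *
        (∑ j ∈ Finset.range N, φ (j:ℤ) t * φ ((N + k - j : ℕ) : ℤ) t) ≤ 0 := by
      have e1 : ∀ k ∈ Finset.range N, (k:ℝ) *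
          (∑ j ∈ Finset.range N, φ (j:ℤ) t * φ ((N + k - j : ℕ) : ℤ) t)
          = ∑ j ∈ Finset.range N, (k:ℝ) * (φ (j:ℤ) t * φ ((N + k - j : ℕ) : ℤ) t) :=
        fun k _ => Finset.mul_sum _ _ _
      rw [Finset.sum_congr rfl e1, Finset.sum_comm]
      have e2 : ∀ j ∈ Finset.range N,
          ∑ k ∈ Finset.range N, (k:ℝ) * (φ (j:ℤ) t * φ ((N + k - j : ℕ) : ℤ) t)
          = φ (j:ℤ) t * ((∑ k ∈ Finset.range N, (k:ℝ) * φ (k:ℤ) t)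
              + N * ∑ e ∈ Finset.range (N - j), φ (e:ℤ) t) := by
        intro j hj
        have hj' : j < N := Finset.mem_range.mp hj
        have e3 : ∀ k ∈ Finset.range N, (k:ℝ) * (φ (j:ℤ) t * φ ((N + k - j : ℕ) : ℤ) t)
            = φ (j:ℤ) t * ((k:ℝ) * φ (((N - j) + k : ℕ) : ℤ) t) := by
          intro k _
          rw [show N + k - j = (N - j) + k by omega]
          ring
        rw [Finset.sum_congr rfl e3, ← Finset.mul_sum, wshift h.1 t (hsz t hts) (N - j)]
      rw [Finset.sum_congr rfl e2]
      have e4 : ∀ j ∈ Finset.range N,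
          φ (j:ℤ) t * ((∑ k ∈ Finset.range N, (k:ℝ) * φ (k:ℤ) t)
            + N * ∑ e ∈ Finset.range (N - j), φ (e:ℤ) t)
          = φ (j:ℤ) t * (∑ k ∈ Finset.range N, (k:ℝ) * φ (k:ℤ) t)
            + (N:ℝ) * (φ (j:ℤ) t * ∑ e ∈ Finset.range (N - j), φ (e:ℤ) t) :=
        fun j _ => by ring
      rw [Finset.sum_congr rfl e4, Finset.sum_add_distrib]
      have e5 : ∑ j ∈ Finset.range N,
          φ (j:ℤ) t * (∑ k ∈ Finset.range N, (k:ℝ) * φ (k:ℤ) t) = 0 := by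
        rw [← Finset.sum_mul, hsz t hts, zero_mul]
      have e6 : ∑ j ∈ Finset.range N,
          (N:ℝ) * (φ (j:ℤ) t * ∑ e ∈ Finset.range (N - j), φ (e:ℤ) t) ≤ 0 := by
        refine Finset.sum_nonpos fun j hj => ?_
        have hj' : j < N := Finset.mem_range.mp hj
        rcases Nat.eq_zero_or_pos j with hj0 | hj0
        · subst hj0
          rw [Nat.sub_zero, hsz t hts]
          simp
        · have hsplit := Finset.sum_range_add_sum_Ico (fun e => φ (e:ℤ) t)
            (show N - j ≤ N by omega)
          have hIco : ∑ e ∈ Finset.Ico (N - j) N, φ (e:ℤ) t ≤ 0 := by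
            refine Finset.sum_nonpos fun e he => ?_
            have he' := Finset.mem_Ico.mp he
            exact hsigns e (by omega) he'.2 t hts
          have hSj : 0 ≤ ∑ e ∈ Finset.range (N - j), φ (e:ℤ) t := by
            rw [hsz t hts] at hsplit
            linarith
          have hφj : φ (j:ℤ) t ≤ 0 := hsigns j hj0 hj' t hts
          have : φ (j:ℤ) t * ∑ e ∈ Finset.range (N - j), φ (e:ℤ) t ≤ 0 := by nlinarith
          have hN0 : (0:ℝ) ≤ N := by positivity
          nlinarith
      linarith
    have e7 : m' s = ∑ k ∈ Finset.range N, (k:ℝ) * D k t := by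
      simp only [hm']
      rw [Finset.sum_congr rfl
        (fun k _ => by ring : ∀ k ∈ Finset.range N,
          (k:ℝ) * (-(D k (T - s))) = -((k:ℝ) * D k (T - s)))]
      rw [Finset.sum_neg_distrib, neg_neg]
    have e8 : ∑ k ∈ Finset.range N, (k:ℝ) * D k t
        = (∑ k ∈ Finset.range N, (k:ℝ) *
            (∑ j ∈ Finset.range N, φ (j:ℤ) t * φ ((N + k - j : ℕ) : ℤ) t))
          - ∑ k ∈ Finset.range N, (k:ℝ) * epsN ε k := by
      rw [← Finset.sum_sub_distrib]
      refine Finset.sum_congr rfl fun k _ => ?_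
      simp only [hD]
      ring
    rw [e7, e8, heps]
    have : 0 * m s = 0 := by ring
    linarith
  have hgron := gronwall_le hmd hm0 hbound
  intro t ht
  have hs : T - t ∈ Icc (0:ℝ) T := hmem ht
  have h4 := hgron (T - t) hs
  rw [gronwallBound_K0] at h4
  simp only [hm, show T - (T - t) = t by ring, sub_zero] at h4
  have : ε * (T - t) ≤ ε * T := by nlinarith [ht.1]
  linarith
end Moment

/-- For every fixed `i ∈ ℕ` and `t ∈ [0,T]`,
`lim_{N→∞} ∑_{j=i+1}^{N-1} φ_N^j(t) φ_N^{N+i-j}(t) = 0`. -/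
theorem catalan_riccati_tail_convergence
    (T ε c : ℝ) (hT : 0 < T) (hε : 0 < ε) (hc : 0 ≤ c)
    (φ : ℕ → ℤ → ℝ → ℝ) (hφ : ∀ N : ℕ, 2 ≤ N → IsPerRiccatiSol T ε c N (φ N)) :
    ∀ i : ℕ, ∀ t ∈ Set.Icc (0:ℝ) T,
      Filter.Tendsto
        (fun N : ℕ =>
          ∑ j ∈ Finset.Ico (i + 1) N, φ N (j : ℤ) t * φ N ((N : ℤ) + (i : ℤ) - (j : ℤ)) t)
        Filter.atTop (nhds 0) := by
  intro i t ht
  set M : ℝ := c + ε * T with hM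
  have hM0 : 0 < M := by rw [hM]; nlinarith
  have key : ∀ N : ℕ, 2 ≤ N →
      0 ≤ (∑ j ∈ Finset.Ico (i + 1) N, φ N (j : ℤ) t * φ N ((N : ℤ) + (i : ℤ) - (j : ℤ)) t) ∧
      (∑ j ∈ Finset.Ico (i + 1) N, φ N (j : ℤ) t * φ N ((N : ℤ) + (i : ℤ) - (j : ℤ)) t)
        ≤ 2 * M ^ 2 / N := by
    intro N hN
    have h := hφ N hN
    have hsigns := signs h hN hT hε hc
    have hsz := sum_zero h hN hT
    have hx0 := x0_bound h hN hT hε hc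
    have hmom := moment_bound h hN hT hε hc
    have hrw : (∑ j ∈ Finset.Ico (i + 1) N, φ N (j : ℤ) t * φ N ((N : ℤ) + (i : ℤ) - (j : ℤ)) t)
        = ∑ j ∈ Finset.Ico (i + 1) N, φ N (j : ℤ) t * φ N (((N + i - j : ℕ)) : ℤ) t := by
      refine Finset.sum_congr rfl fun j hj => ?_
      have hj' := Finset.mem_Ico.mp hj
      have e : ((N + i - j : ℕ) : ℤ) = (N : ℤ) + (i : ℤ) - (j : ℤ) := by
        push_cast [Nat.cast_sub (by omega : j ≤ N + i)]
        ring
      rw [e]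
    rw [hrw]
    have hbmem : ∀ j ∈ Finset.Ico (i + 1) N, 1 ≤ N + i - j ∧ N + i - j < N := by
      intro j hj
      have := Finset.mem_Ico.mp hj
      omega
    have hlow : 0 ≤ ∑ j ∈ Finset.Ico (i + 1) N, φ N (j : ℤ) t * φ N (((N + i - j : ℕ)) : ℤ) t := by
      refine Finset.sum_nonneg fun j hj => ?_
      have hj' := Finset.mem_Ico.mp hj
      have h1 := hsigns j (by omega) hj'.2 t ht
      have h2 := hsigns (N + i - j) (hbmem j hj).1 (hbmem j hj).2 t ht
      nlinarith
    refine ⟨hlow, ?_⟩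
    -- pointwise bound on y_a
    have hyM : ∀ a : ℕ, 1 ≤ a → a < N → -(φ N (a : ℤ) t) ≤ M := by
      intro a h1 h2
      have hsum0 := hsz t ht
      rw [Finset.sum_range_eq_add_Ico _ (by omega : 0 < N)] at hsum0
      have hys : ∀ k ∈ Finset.Ico 1 N, 0 ≤ -(φ N (k : ℤ) t) := by
        intro k hk
        have hk' := Finset.mem_Ico.mp hk
        linarith [hsigns k hk'.1 hk'.2 t ht]
      have h3 : -(φ N (a : ℤ) t) ≤ ∑ k ∈ Finset.Ico 1 N, -(φ N (k : ℤ) t) :=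
        Finset.single_le_sum hys (Finset.mem_Ico.mpr ⟨h1, h2⟩)
      have h4 : ∑ k ∈ Finset.Ico 1 N, -(φ N (k : ℤ) t) = φ N ((0 : ℕ) : ℤ) t := by
        rw [Finset.sum_neg_distrib]
        linarith [hsum0]
      rw [h4] at h3
      exact h3.trans (hx0 t ht)
    have hmom' := hmom t ht
    have hjsum : ∑ j ∈ Finset.Ico (i + 1) N, (j : ℝ) * (-(φ N (j : ℤ) t)) ≤ M := by
      refine le_trans (Finset.sum_le_sum_of_subset_of_nonneg ?_ ?_) hmom'
      · rw [Finset.range_eq_Ico]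
        exact Finset.Ico_subset_Ico (Nat.zero_le _) le_rfl
      · intro k hk hk2
        have hk' : k < N := Finset.mem_range.mp hk
        rcases Nat.eq_zero_or_pos k with h0 | h0
        · subst h0; simp
        · have := hsigns k h0 hk' t ht
          have : 0 ≤ -(φ N (k : ℤ) t) := by linarith
          positivity
    have hbsum : ∑ j ∈ Finset.Ico (i + 1) N,
        ((N + i - j : ℕ) : ℝ) * (-(φ N (((N + i - j : ℕ)) : ℤ) t)) ≤ M := by
      have hre : ∑ j ∈ Finset.Ico (i + 1) N,
          ((N + i - j : ℕ) : ℝ) * (-(φ N (((N + i - j : ℕ)) : ℤ) t))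
          = ∑ k ∈ Finset.Ico (i + 1) N, (k : ℝ) * (-(φ N (k : ℤ) t)) := by
        refine Finset.sum_nbij' (fun j => N + i - j) (fun k => N + i - k) ?_ ?_ ?_ ?_ ?_
        · intro a ha
          have := Finset.mem_Ico.mp ha
          simp only [Finset.mem_Ico]
          omega
        · intro a ha
          have := Finset.mem_Ico.mp ha
          simp only [Finset.mem_Ico]
          omega
        · intro a ha
          have := Finset.mem_Ico.mp ha
          omega
        · intro a ha
          have := Finset.mem_Ico.mp ha
          omega
        · intro a _
          rfl
      rw [hre]
      refine le_trans (Finset.sum_le_sum_of_subset_of_nonneg ?_ ?_) hmom'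
      · rw [Finset.range_eq_Ico]
        exact Finset.Ico_subset_Ico (Nat.zero_le _) le_rfl
      · intro k hk hk2
        have hk' : k < N := Finset.mem_range.mp hk
        rcases Nat.eq_zero_or_pos k with h0 | h0
        · subst h0; simp
        · have := hsigns k h0 hk' t ht
          have : 0 ≤ -(φ N (k : ℤ) t) := by linarith
          positivity
    have hN0 : (0:ℝ) < N := by positivity
    have hterm : ∀ j ∈ Finset.Ico (i + 1) N,
        φ N (j : ℤ) t * φ N (((N + i - j : ℕ)) : ℤ) t
          ≤ (M / N) * ((j : ℝ) * (-(φ N (j : ℤ) t))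
            + ((N + i - j : ℕ) : ℝ) * (-(φ N (((N + i - j : ℕ)) : ℤ) t))) := by
      intro j hj
      have hj' := Finset.mem_Ico.mp hj
      set u : ℝ := -(φ N (j : ℤ) t) with hu
      set v : ℝ := -(φ N (((N + i - j : ℕ)) : ℤ) t) with hv
      have hu0 : 0 ≤ u := by
        rw [hu]; linarith [hsigns j (by omega) hj'.2 t ht]
      have hv0 : 0 ≤ v := by
        rw [hv]; linarith [hsigns (N + i - j) (hbmem j hj).1 (hbmem j hj).2 t ht]
      have huM : u ≤ M := hyM j (by omega) hj'.2
      have hvM : v ≤ M := hyM (N + i - j) (hbmem j hj).1 (hbmem j hj).2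
      have hjb : (N : ℝ) ≤ (j : ℝ) + ((N + i - j : ℕ) : ℝ) := by
        have : (N : ℕ) ≤ j + (N + i - j) := by omega
        exact_mod_cast this
      have hj0 : (0:ℝ) ≤ (j : ℝ) := Nat.cast_nonneg _
      have hb0 : (0:ℝ) ≤ ((N + i - j : ℕ) : ℝ) := Nat.cast_nonneg _
      have hgoal : φ N (j : ℤ) t * φ N (((N + i - j : ℕ)) : ℤ) t = u * v := by
        rw [hu, hv]; ring
      rw [hgoal, div_mul_eq_mul_div, le_div_iff₀ hN0]
      nlinarith [mul_nonneg (mul_nonneg hj0 hu0) (sub_nonneg.mpr hvM),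
        mul_nonneg (mul_nonneg hb0 hv0) (sub_nonneg.mpr huM),
        mul_nonneg (sub_nonneg.mpr hjb) (mul_nonneg hu0 hv0)]
    calc ∑ j ∈ Finset.Ico (i + 1) N, φ N (j : ℤ) t * φ N (((N + i - j : ℕ)) : ℤ) t
        ≤ ∑ j ∈ Finset.Ico (i + 1) N, (M / N) * ((j : ℝ) * (-(φ N (j : ℤ) t))
            + ((N + i - j : ℕ) : ℝ) * (-(φ N (((N + i - j : ℕ)) : ℤ) t))) :=
          Finset.sum_le_sum hterm
      _ = (M / N) * ((∑ j ∈ Finset.Ico (i + 1) N, (j : ℝ) * (-(φ N (j : ℤ) t)))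
            + ∑ j ∈ Finset.Ico (i + 1) N,
              ((N + i - j : ℕ) : ℝ) * (-(φ N (((N + i - j : ℕ)) : ℤ) t))) := by
          rw [← Finset.mul_sum, Finset.sum_add_distrib]
      _ ≤ (M / N) * (M + M) := by
          have hMN : 0 ≤ M / N := by positivity
          nlinarith [hjsum, hbsum]
      _ = 2 * M ^ 2 / N := by ring
  refine tendsto_of_tendsto_of_tendsto_of_le_of_le' tendsto_const_nhds
    (tendsto_const_div_atTop_nhds_zero_nat (2 * M ^ 2)) ?_ ?_
  · filter_upwards [eventually_ge_atTop 2] with N hN2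
    exact (key N hN2).1
  · filter_upwards [eventually_ge_atTop 2] with N hN2
    exact (key N hN2).2
end

section
/- For every x ∈ (0,1) and every t ∈ [0,T], the denominator 𝔞⁺(x)𝔢_t⁺(x) + 𝔞⁻(x)𝔢_t⁻(x) is nonzero, the function t ↦ f_t(x) is differentiable with derivative (d/dt) f_t(x) = (f_t(x))² − (1 − e^{−2π√(−1)x}) ε, and it satisfies the terminal condition f_T(x) = (1 − e^{−2π√(−1)x}) c. In other words, the explicit function f solves the auxiliary complex Riccati equation. -/
open scoped BigOperators

/-- `𝔯(x) := (2(1 − cos(2πx)))^{1/4}`. -/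
noncomputable def frakr (x : ℝ) : ℝ := (2 * (1 - Real.cos (2 * Real.pi * x))) ^ ((1:ℝ)/4)

/-- `θ(x) := (1/2) arctan( sin(2πx) / (1 − cos(2πx)) )`. -/
noncomputable def thetaCat (x : ℝ) : ℝ :=
  (1/2) * Real.arctan (Real.sin (2 * Real.pi * x) / (1 - Real.cos (2 * Real.pi * x)))

/-- The complex number `𝔯(x) e^{√(−1) θ(x)}`. -/
noncomputable def rTheta (x : ℝ) : ℂ := (frakr x : ℂ) * Complex.exp (Complex.I * (thetaCat x : ℂ))

/-- `𝔞⁺(x) := √ε + c 𝔯(x) e^{√(−1)θ(x)}`. -/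
noncomputable def aPlus (ε c : ℝ) (x : ℝ) : ℂ := (Real.sqrt ε : ℂ) + (c : ℂ) * rTheta x

/-- `𝔞⁻(x) := √ε − c 𝔯(x) e^{√(−1)θ(x)}`. -/
noncomputable def aMinus (ε c : ℝ) (x : ℝ) : ℂ := (Real.sqrt ε : ℂ) - (c : ℂ) * rTheta x

/-- `𝔢_t⁺(x) := exp( √ε 𝔯(x) e^{√(−1)θ(x)} (T−t) )`. -/
noncomputable def ePlus (T ε : ℝ) (t x : ℝ) : ℂ :=
  Complex.exp ((Real.sqrt ε : ℂ) * rTheta x * ((T : ℂ) - (t : ℂ)))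

/-- `𝔢_t⁻(x) := exp( −√ε 𝔯(x) e^{√(−1)θ(x)} (T−t) )`. -/
noncomputable def eMinus (T ε : ℝ) (t x : ℝ) : ℂ :=
  Complex.exp (-((Real.sqrt ε : ℂ) * rTheta x * ((T : ℂ) - (t : ℂ))))

/-- The Catalan generating-type function
`f_t(x) := √ε 𝔯(x) e^{√(−1)θ(x)} (𝔞⁺𝔢_t⁺ − 𝔞⁻𝔢_t⁻)/(𝔞⁺𝔢_t⁺ + 𝔞⁻𝔢_t⁻)`, for `x ∈ (0,1)`. -/
noncomputable def fCat (T ε c : ℝ) (t x : ℝ) : ℂ :=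
  (Real.sqrt ε : ℂ) * rTheta x *
    ((aPlus ε c x * ePlus T ε t x - aMinus ε c x * eMinus T ε t x) /
      (aPlus ε c x * ePlus T ε t x + aMinus ε c x * eMinus T ε t x))

/-- The extension of `f` to `[0,1]` by `f_t(0) := 0` and `f_t(1) := 0`. -/
noncomputable def fCatExt (T ε c : ℝ) (t x : ℝ) : ℂ :=
  if x = 0 ∨ x = 1 then 0 else fCat T ε c t x


namespace CatalanRiccatiAux

lemma one_sub_cos_pos (x : ℝ) (hx : x ∈ Set.Ioo (0:ℝ) 1) :
    0 < 1 - Real.cos (2 * Real.pi * x) := by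
  rcases hx with ⟨h0, h1⟩
  have hπ := Real.pi_pos
  have hne : Real.cos (2 * Real.pi * x) ≠ 1 := by
    intro h
    have := (Real.cos_eq_one_iff_of_lt_of_lt (x := 2 * Real.pi * x)
      (by nlinarith) (by nlinarith)).1 h
    nlinarith
  rcases (Real.cos_le_one (2 * Real.pi * x)).lt_or_eq with h | h
  · linarith
  · exact absurd h hne

lemma real_aux (d sφ : ℝ) (hd : 0 < d) (h : d ^ 2 + sφ ^ 2 = 2 * d) :
    Real.sqrt (2 * d) * Real.cos (Real.arctan (sφ / d)) = d ∧
    Real.sqrt (2 * d) * Real.sin (Real.arctan (sφ / d)) = sφ := by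
  have hy2 : 1 + (sφ / d) ^ 2 = 2 / d := by
    have h1 : 1 + (sφ / d) ^ 2 = (d ^ 2 + sφ ^ 2) / d ^ 2 := by field_simp
    rw [h1, h]
    field_simp
  have h2d : (0:ℝ) < 2 / d := by positivity
  have hsq : Real.sqrt (2 * d) = d * Real.sqrt (2 / d) := by
    have h1 : 2 * d = d ^ 2 * (2 / d) := by field_simp
    rw [h1, Real.sqrt_mul (sq_nonneg d), Real.sqrt_sq hd.le]
  have hs2d : Real.sqrt (2 / d) ≠ 0 := by positivity
  constructor
  · rw [Real.cos_arctan, hy2, hsq]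
    field_simp
  · rw [Real.sin_arctan, hy2, hsq]
    field_simp

end CatalanRiccatiAux

open CatalanRiccatiAux in
lemma frakr_sq (x : ℝ) (hd : 0 < 1 - Real.cos (2 * Real.pi * x)) :
    (frakr x) ^ 2 = Real.sqrt (2 * (1 - Real.cos (2 * Real.pi * x))) := by
  rw [frakr, ← Real.rpow_natCast ((2 * (1 - Real.cos (2 * Real.pi * x))) ^ ((1:ℝ)/4)) 2,
    ← Real.rpow_mul (by positivity), Real.sqrt_eq_rpow]
  norm_num

lemma frakr_pos (x : ℝ) (hd : 0 < 1 - Real.cos (2 * Real.pi * x)) : 0 < frakr x :=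
  Real.rpow_pos_of_pos (by linarith) _

lemma rTheta_eq (x : ℝ) : rTheta x =
    (frakr x : ℂ) * (Real.cos (thetaCat x) + Real.sin (thetaCat x) * Complex.I) := by
  rw [rTheta, mul_comm Complex.I, Complex.exp_mul_I]
  push_cast
  ring

lemma rTheta_re_pos (x : ℝ) (hd : 0 < 1 - Real.cos (2 * Real.pi * x)) :
    0 < (rTheta x).re := by
  have h1 : (rTheta x).re = frakr x * Real.cos (thetaCat x) := by
    rw [rTheta_eq]
    simp [Complex.mul_re, Complex.add_re, Complex.add_im, Complex.mul_im, Complex.cos_ofReal_re]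
  rw [h1]
  have hθ : thetaCat x ∈ Set.Ioo (-(Real.pi/2)) (Real.pi/2) := by
    have h2 := Real.arctan_lt_pi_div_two
      (Real.sin (2 * Real.pi * x) / (1 - Real.cos (2 * Real.pi * x)))
    have h3 := Real.neg_pi_div_two_lt_arctan
      (Real.sin (2 * Real.pi * x) / (1 - Real.cos (2 * Real.pi * x)))
    constructor <;> (rw [thetaCat]; nlinarith [Real.pi_pos])
  exact mul_pos (frakr_pos x hd) (Real.cos_pos_of_mem_Ioo hθ)

lemma rTheta_sq (x : ℝ) (hd : 0 < 1 - Real.cos (2 * Real.pi * x)) :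
    rTheta x ^ 2 = 1 - Complex.exp (-(2 * Real.pi * Complex.I * (x : ℂ))) := by
  have hpyth : (1 - Real.cos (2 * Real.pi * x)) ^ 2 + Real.sin (2 * Real.pi * x) ^ 2
      = 2 * (1 - Real.cos (2 * Real.pi * x)) := by
    nlinarith [Real.sin_sq_add_cos_sq (2 * Real.pi * x)]
  have key := CatalanRiccatiAux.real_aux (1 - Real.cos (2 * Real.pi * x))
    (Real.sin (2 * Real.pi * x)) hd hpyth
  have h2θ : 2 * thetaCat x =
      Real.arctan (Real.sin (2 * Real.pi * x) / (1 - Real.cos (2 * Real.pi * x))) := by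
    rw [thetaCat]; ring
  have hL : rTheta x ^ 2 =
      ((frakr x ^ 2 * Real.cos (2 * thetaCat x) : ℝ) : ℂ)
        + ((frakr x ^ 2 * Real.sin (2 * thetaCat x) : ℝ) : ℂ) * Complex.I := by
    rw [rTheta, mul_pow, ← Complex.exp_nat_mul]
    have h1 : ((2:ℕ):ℂ) * (Complex.I * (thetaCat x : ℂ))
        = ((2 * thetaCat x : ℝ):ℂ) * Complex.I := by push_cast; ring
    rw [h1, Complex.exp_mul_I, ← Complex.ofReal_cos, ← Complex.ofReal_sin]
    push_cast
    ring
  have hR : Complex.exp (-(2 * Real.pi * Complex.I * (x : ℂ)))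
      = ((Real.cos (2 * Real.pi * x) : ℝ) : ℂ)
        - ((Real.sin (2 * Real.pi * x) : ℝ):ℂ) * Complex.I := by
    have h1 : -(2 * (Real.pi:ℂ) * Complex.I * (x:ℂ))
        = ((-(2 * Real.pi * x) : ℝ):ℂ) * Complex.I := by push_cast; ring
    rw [h1, Complex.exp_mul_I, ← Complex.ofReal_cos, ← Complex.ofReal_sin,
      Real.cos_neg, Real.sin_neg]
    push_cast
    ring
  rw [hL, hR, h2θ, frakr_sq x hd, key.1, key.2]
  push_cast
  ring


/-- For every `x ∈ (0,1)` and `t ∈ [0,T]`, the denominator `𝔞⁺𝔢_t⁺ + 𝔞⁻𝔢_t⁻` is nonzero,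
`t ↦ f_t(x)` is differentiable with `(d/dt) f_t(x) = (f_t(x))² − (1 − e^{−2π√(−1)x}) ε`,
and `f_T(x) = (1 − e^{−2π√(−1)x}) c`: the explicit function `f` solves the auxiliary complex
Riccati equation. -/
theorem fCat_solves_auxiliary_riccati
    (T ε c : ℝ) (hT : 0 < T) (hε : 0 < ε) (hc : 0 ≤ c) :
    ∀ x ∈ Set.Ioo (0:ℝ) 1, ∀ t ∈ Set.Icc (0:ℝ) T,
      (aPlus ε c x * ePlus T ε t x + aMinus ε c x * eMinus T ε t x ≠ 0) ∧
      HasDerivWithinAt (fun s : ℝ => fCat T ε c s x)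
        ((fCat T ε c t x) ^ 2 -
          (1 - Complex.exp (-(2 * Real.pi * Complex.I * (x : ℂ)))) * (ε : ℂ))
        (Set.Icc (0:ℝ) T) t ∧
      fCat T ε c T x = (1 - Complex.exp (-(2 * Real.pi * Complex.I * (x : ℂ)))) * (c : ℂ) := by
  intro x hx t ht
  have hd : 0 < 1 - Real.cos (2 * Real.pi * x) := CatalanRiccatiAux.one_sub_cos_pos x hx
  have hre : 0 < (rTheta x).re := rTheta_re_pos x hd
  have hsq : rTheta x ^ 2 = 1 - Complex.exp (-(2 * Real.pi * Complex.I * (x : ℂ))) :=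
    rTheta_sq x hd
  have hs0 : (0:ℝ) < Real.sqrt ε := Real.sqrt_pos.2 hε
  have hsne : ((Real.sqrt ε : ℝ) : ℂ) ≠ 0 := Complex.ofReal_ne_zero.mpr hs0.ne'
  -- the denominator is nonzero for every u ∈ [0,T]
  have hden : ∀ u ∈ Set.Icc (0:ℝ) T,
      aPlus ε c x * ePlus T ε u x + aMinus ε c x * eMinus T ε u x ≠ 0 := by
    intro u hu
    rcases eq_or_lt_of_le hu.2 with h | h
    · -- u = T
      rw [h]
      have hE : ePlus T ε T x = 1 := by simp [ePlus]
      have hF : eMinus T ε T x = 1 := by simp [eMinus]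
      rw [hE, hF, mul_one, mul_one]
      have : aPlus ε c x + aMinus ε c x = 2 * (Real.sqrt ε : ℂ) := by
        rw [aPlus, aMinus]; ring
      rw [this]
      simp [hsne]
    · -- u < T
      have hReu : 0 < ((Real.sqrt ε : ℂ) * rTheta x * ((T:ℂ) - (u:ℂ))).re := by
        have h1 : (Real.sqrt ε : ℂ) * rTheta x * ((T:ℂ) - (u:ℂ))
            = ((Real.sqrt ε * (T - u) : ℝ) : ℂ) * rTheta x := by push_cast; ring
        rw [h1, Complex.re_ofReal_mul]
        exact mul_pos (mul_pos hs0 (by linarith)) hre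
      have habsE : ‖eMinus T ε u x‖ < ‖ePlus T ε u x‖ := by
        rw [ePlus, eMinus, Complex.norm_exp, Complex.norm_exp, Complex.neg_re]
        exact Real.exp_lt_exp.2 (by linarith)
      have habsA : ‖aMinus ε c x‖ ≤ ‖aPlus ε c x‖ := by
        rw [Complex.norm_def, Complex.norm_def]
        apply Real.sqrt_le_sqrt
        rw [aPlus, aMinus]
        simp only [Complex.normSq_apply, Complex.add_re, Complex.add_im, Complex.sub_re,
          Complex.sub_im, Complex.ofReal_re, Complex.ofReal_im, Complex.mul_re, Complex.mul_im]
        nlinarith [mul_nonneg (mul_nonneg hs0.le hc) hre.le]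
      have hap : aPlus ε c x ≠ 0 := by
        intro h0
        have := congrArg Complex.re h0
        rw [aPlus] at this
        simp only [Complex.add_re, Complex.ofReal_re, Complex.mul_re, Complex.ofReal_im,
          Complex.zero_re] at this
        nlinarith [mul_nonneg hc hre.le]
      have hapos : 0 < ‖aPlus ε c x‖ := norm_pos_iff.2 hap
      intro h0
      have h1 : aPlus ε c x * ePlus T ε u x = -(aMinus ε c x * eMinus T ε u x) :=
        eq_neg_of_add_eq_zero_left h0
      have h2 := congrArg norm h1
      rw [norm_mul, norm_neg, norm_mul] at h2
      have h3 : ‖aMinus ε c x‖ * ‖eMinus T ε u x‖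
          < ‖aPlus ε c x‖ * ‖ePlus T ε u x‖ := by
        calc ‖aMinus ε c x‖ * ‖eMinus T ε u x‖
            ≤ ‖aPlus ε c x‖ * ‖eMinus T ε u x‖ :=
              mul_le_mul_of_nonneg_right habsA (norm_nonneg _)
          _ < ‖aPlus ε c x‖ * ‖ePlus T ε u x‖ :=
              (mul_lt_mul_iff_right₀ hapos).2 habsE
      rw [h2] at h3
      exact lt_irrefl _ h3
  have hDne := hden t ht
  refine ⟨hDne, ?_, ?_⟩
  · -- the derivative
    set k : ℂ := (Real.sqrt ε : ℂ) * rTheta x with hk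
    have hk2 : (1 - Complex.exp (-(2 * Real.pi * Complex.I * (x : ℂ)))) * (ε : ℂ) = k ^ 2 := by
      rw [hk, mul_pow, ← hsq]
      have : ((Real.sqrt ε : ℝ) : ℂ) ^ 2 = (ε : ℂ) := by
        rw [← Complex.ofReal_pow, Real.sq_sqrt hε.le]
      rw [this]
      ring
    have hE : HasDerivAt (fun v : ℝ => ePlus T ε v x) (-k * ePlus T ε t x) t := by
      have h1 : HasDerivAt (fun z : ℂ => Complex.exp (k * ((T:ℂ) - z)))
          (Complex.exp (k * ((T:ℂ) - (t:ℂ))) * (k * (0 - 1))) (t:ℂ) :=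
        (((hasDerivAt_const (t:ℂ) ((T:ℂ))).sub (hasDerivAt_id _)).const_mul k).cexp
      have h2 := h1.comp_ofReal
      convert h2 using 1
      · rfl
      rw [ePlus, hk]
      ring
    have hF : HasDerivAt (fun v : ℝ => eMinus T ε v x) (k * eMinus T ε t x) t := by
      have h1 : HasDerivAt (fun z : ℂ => Complex.exp (-(k * ((T:ℂ) - z))))
          (Complex.exp (-(k * ((T:ℂ) - (t:ℂ)))) * -(k * (0 - 1))) (t:ℂ) :=
        ((((hasDerivAt_const (t:ℂ) ((T:ℂ))).sub (hasDerivAt_id _)).const_mul k).neg).cexp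
      have h2 := h1.comp_ofReal
      convert h2 using 1
      · rfl
      rw [eMinus, hk]
      ring
    have hN : HasDerivAt
        (fun v : ℝ => aPlus ε c x * ePlus T ε v x - aMinus ε c x * eMinus T ε v x)
        (aPlus ε c x * (-k * ePlus T ε t x) - aMinus ε c x * (k * eMinus T ε t x)) t :=
      (hE.const_mul _).sub (hF.const_mul _)
    have hD : HasDerivAt
        (fun v : ℝ => aPlus ε c x * ePlus T ε v x + aMinus ε c x * eMinus T ε v x)
        (aPlus ε c x * (-k * ePlus T ε t x) + aMinus ε c x * (k * eMinus T ε t x)) t :=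
      (hE.const_mul _).add (hF.const_mul _)
    have hf := (hN.div hD hDne).const_mul k
    apply HasDerivAt.hasDerivWithinAt
    have hfun : (fun v : ℝ => fCat T ε c v x)
        = fun v : ℝ => k * ((aPlus ε c x * ePlus T ε v x - aMinus ε c x * eMinus T ε v x) /
            (aPlus ε c x * ePlus T ε v x + aMinus ε c x * eMinus T ε v x)) := by
      funext v
      rw [fCat, hk]
    rw [hfun]
    convert hf using 1
    · rfl
    · rfl
    rw [fCat, ← hk, hk2]
    set A := aPlus ε c x
    set B := aMinus ε c x
    set E := ePlus T ε t x
    set F := eMinus T ε t x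
    have hD0 : A * E + B * F ≠ 0 := hDne
    field_simp
    ring
  · -- terminal condition
    have hE : ePlus T ε T x = 1 := by simp [ePlus]
    have hF : eMinus T ε T x = 1 := by simp [eMinus]
    rw [fCat, hE, hF, mul_one, mul_one, ← hsq]
    have h1 : aPlus ε c x - aMinus ε c x = 2 * (c : ℂ) * rTheta x := by
      rw [aPlus, aMinus]; ring
    have h2 : aPlus ε c x + aMinus ε c x = 2 * (Real.sqrt ε : ℂ) := by
      rw [aPlus, aMinus]; ring
    rw [h1, h2]
    field_simp
end

section
/- Let g : [0,1] → ℂ be continuous and such that all of its negative-frequency Fourier coefficients vanish, i.e. ∫₀¹ g(x) e^{−2π√(−1) kx} dx = 0 for every integer k ≥ 1. Set c_j := ∫₀¹ g(x) e^{2π√(−1) jx} dx for j ∈ ℕ. Then for every j ∈ ℕ, ∫₀¹ (g(x))² e^{2π√(−1) jx} dx = Σ_{k=0}^{j} c_k c_{j−k}. -/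
open scoped BigOperators

open scoped ComplexConjugate
open MeasureTheory Set Complex

namespace SquareFourierAux

noncomputable section

lemma fourierCoeff_lift (h : ℝ → ℂ) (n : ℤ) :
    fourierCoeff (AddCircle.liftIoc 1 0 h) n
      = ∫ x in (0:ℝ)..1, h x * Complex.exp (-(2 * Real.pi * Complex.I * n * x)) := by
  rw [fourierCoeff_eq_intervalIntegral _ n 0]
  norm_num
  rw [intervalIntegral.integral_of_le (by norm_num : (0:ℝ) ≤ 1),
      intervalIntegral.integral_of_le (by norm_num : (0:ℝ) ≤ 1)]
  refine setIntegral_congr_fun measurableSet_Ioc (fun x hx => ?_)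
  rw [AddCircle.liftIoc_coe_apply (by simpa using hx)]
  rw [mul_comm]
  congr 1
  rw [← Complex.exp_conj]
  congr 1
  simp only [map_mul, Complex.conj_I, Complex.conj_ofReal, map_intCast, map_ofNat]
  ring

lemma sq_lift (g : ℝ → ℂ) (t : AddCircle 1) :
    (AddCircle.liftIoc 1 0 g t) ^ 2 = AddCircle.liftIoc 1 0 (fun x => g x ^ 2) t := rfl

lemma fourierCoeff_congr_ae {T : ℝ} [hT : Fact (0 < T)] {f₁ f₂ : AddCircle T → ℂ}
    (h : f₁ =ᵐ[AddCircle.haarAddCircle] f₂) (n : ℤ) : fourierCoeff f₁ n = fourierCoeff f₂ n := by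
  unfold fourierCoeff
  exact integral_congr_ae (h.mono fun t ht => by dsimp only; rw [ht])

end
end SquareFourierAux

open SquareFourierAux


/-- If `g : [0,1] → ℂ` is continuous with vanishing negative-frequency Fourier coefficients,
i.e. `∫₀¹ g(x) e^{−2π√(−1)kx} dx = 0` for all integers `k ≥ 1`, and
`c_j := ∫₀¹ g(x) e^{2π√(−1)jx} dx`, then for every `j ∈ ℕ`,
`∫₀¹ (g(x))² e^{2π√(−1)jx} dx = ∑_{k=0}^{j} c_k c_{j−k}`. -/
theorem square_fourier_coefficient_convolution
    (g : ℝ → ℂ) (hg : ContinuousOn g (Set.Icc (0:ℝ) 1))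
    (hneg : ∀ k : ℕ, 1 ≤ k →
      (∫ x in (0:ℝ)..1, g x * Complex.exp (-(2 * Real.pi * Complex.I * (k : ℂ) * (x : ℂ)))) = 0) :
    ∀ j : ℕ,
      (∫ x in (0:ℝ)..1, (g x) ^ 2 * Complex.exp (2 * Real.pi * Complex.I * (j : ℂ) * (x : ℂ)))
        = ∑ k ∈ Finset.range (j + 1),
            (∫ x in (0:ℝ)..1, g x * Complex.exp (2 * Real.pi * Complex.I * (k : ℂ) * (x : ℂ))) *
            (∫ x in (0:ℝ)..1,
              g x * Complex.exp (2 * Real.pi * Complex.I * ((j - k : ℕ) : ℂ) * (x : ℂ))) := by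
  intro j
  haveI : Fact ((0:ℝ) < 1) := ⟨one_pos⟩
  set F : AddCircle (1:ℝ) → ℂ := AddCircle.liftIoc 1 0 g with hFdef
  obtain ⟨C, hC⟩ := isCompact_Icc.exists_bound_of_continuousOn hg
  have hmem : ∀ t : AddCircle (1:ℝ), ((AddCircle.equivIoc (1:ℝ) (0:ℝ) t : ℝ)) ∈ Icc (0:ℝ) 1 := by
    intro t
    have := (AddCircle.equivIoc (1:ℝ) (0:ℝ) t).2
    norm_num at this
    exact Ioc_subset_Icc_self this
  have hFbound : ∀ t, ‖F t‖ ≤ C := fun t => hC _ (hmem t)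
  have hFmeas : Measurable F := by
    have hc : Continuous ((Set.Ioc (0:ℝ) (0+1)).restrict g) := by
      rw [zero_add]
      exact continuousOn_iff_continuous_restrict.mp (hg.mono Ioc_subset_Icc_self)
    exact hc.measurable.comp (AddCircle.measurableEquivIoc (1:ℝ) (0:ℝ)).measurable
  have hFae : AEStronglyMeasurable F AddCircle.haarAddCircle := hFmeas.aestronglyMeasurable
  have hF2 : MemLp F 2 AddCircle.haarAddCircle :=
    MemLp.of_bound hFae C (Filter.Eventually.of_forall hFbound)
  set Fc : AddCircle (1:ℝ) → ℂ := fun t => conj (F t) with hFcdef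
  have hFc2 : MemLp Fc 2 AddCircle.haarAddCircle :=
    MemLp.of_bound (Complex.continuous_conj.comp_aestronglyMeasurable hFae) C
      (Filter.Eventually.of_forall (fun t => by simp only [hFcdef, RCLike.norm_conj]; exact hFbound t))
  set V : AddCircle (1:ℝ) → ℂ := fun t => F t * fourier (j:ℤ) t with hVdef
  have hVae : AEStronglyMeasurable V AddCircle.haarAddCircle :=
    hFae.mul (fourier (j:ℤ)).continuous.aestronglyMeasurable
  have hV2 : MemLp V 2 AddCircle.haarAddCircle := by
    refine MemLp.of_bound hVae C (Filter.Eventually.of_forall fun t => ?_)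
    have h1 : ‖fourier (j:ℤ) t‖ = 1 := Circle.norm_coe _
    calc ‖F t * fourier (j:ℤ) t‖ = ‖F t‖ * ‖fourier (j:ℤ) t‖ := norm_mul _ _
    _ ≤ C := by rw [h1, mul_one]; exact hFbound t
  set w := hFc2.toLp Fc with hwdef
  set v := hV2.toLp V with hvdef
  have hsum := (innerSL ℂ w).hasSum (hasSum_fourier_series_L2 (T := (1:ℝ)) v)
  -- coefficient computations
  have hv_coeff : ∀ i : ℤ, fourierCoeff (↑↑v : AddCircle (1:ℝ) → ℂ) i = fourierCoeff F (i - j) := by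
    intro i
    rw [fourierCoeff_congr_ae (hV2.coeFn_toLp) i]
    unfold fourierCoeff
    refine integral_congr_ae (Filter.Eventually.of_forall fun t => ?_)
    have h : fourier (-(i - (j:ℤ))) t = fourier (-i) t * fourier (j:ℤ) t := by
      rw [← fourier_add]; congr 1; ring
    simp only [smul_eq_mul, hVdef]
    rw [h]; ring
  have hinner_basis : ∀ i : ℤ, (inner ℂ w (fourierLp 2 i) : ℂ) = fourierCoeff F (-i) := by
    intro i
    rw [MeasureTheory.L2.inner_def]
    unfold fourierCoeff
    refine integral_congr_ae ?_
    filter_upwards [hFc2.coeFn_toLp, coeFn_fourierLp 2 i] with t h1 h2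
    rw [h1, h2, RCLike.inner_apply]
    simp only [hFcdef, Complex.conj_conj, neg_neg, smul_eq_mul]
  have hwv : (inner ℂ w v : ℂ) = fourierCoeff (fun t => F t ^ 2) (-(j:ℤ)) := by
    rw [MeasureTheory.L2.inner_def]
    unfold fourierCoeff
    refine integral_congr_ae ?_
    filter_upwards [hFc2.coeFn_toLp, hV2.coeFn_toLp] with t h1 h2
    rw [h1, h2, RCLike.inner_apply]
    simp only [hFcdef, hVdef, Complex.conj_conj, neg_neg, smul_eq_mul]
    ring
  have hsum2 : HasSum (fun i : ℤ => fourierCoeff F (i - j) * fourierCoeff F (-i))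
      (fourierCoeff (fun t => F t ^ 2) (-(j:ℤ))) := by
    have heq : (fun i : ℤ => (innerSL ℂ w) (fourierCoeff (↑↑v : AddCircle (1:ℝ) → ℂ) i • fourierLp 2 i))
        = fun i : ℤ => fourierCoeff F (i - j) * fourierCoeff F (-i) := by
      funext i
      rw [innerSL_apply_apply, inner_smul_right, hv_coeff i, hinner_basis i]
    rw [heq] at hsum
    rwa [show (innerSL ℂ w) v = fourierCoeff (fun t => F t ^ 2) (-(j:ℤ)) by
      rw [innerSL_apply_apply, hwv]] at hsum
  -- vanishing of positive-index coefficients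
  have hzero : ∀ n : ℤ, 1 ≤ n → fourierCoeff F n = 0 := by
    intro n hn
    rw [hFdef, fourierCoeff_lift]
    have hcast : ((n.toNat : ℕ) : ℂ) = (n : ℂ) := by
      rw [← Int.cast_natCast]
      norm_cast
      omega
    rw [← hcast]
    exact hneg n.toNat (by omega)
  have hfin : ∀ i : ℤ, i ∉ Finset.Icc (0:ℤ) (j:ℤ) →
      fourierCoeff F (i - j) * fourierCoeff F (-i) = 0 := by
    intro i hi
    simp only [Finset.mem_Icc, not_and_or, not_le] at hi
    rcases hi with hi | hi
    · rw [hzero (-i) (by omega), mul_zero]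
    · rw [hzero (i - j) (by omega), zero_mul]
  have hsum3 := hasSum_sum_of_ne_finset_zero (L := SummationFilter.unconditional ℤ) hfin
  have heq := hsum2.unique hsum3
  -- translate back to interval integrals for g
  have hgc : ∀ m : ℤ, fourierCoeff F (-m)
      = ∫ x in (0:ℝ)..1, g x * Complex.exp (2 * Real.pi * Complex.I * (m:ℂ) * (x:ℂ)) := by
    intro m
    rw [hFdef, fourierCoeff_lift]
    refine intervalIntegral.integral_congr fun x _ => ?_
    congr 1
    push_cast
    ring
  have hlhs : fourierCoeff (fun t => F t ^ 2) (-(j:ℤ))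
      = ∫ x in (0:ℝ)..1, (g x) ^ 2 * Complex.exp (2 * Real.pi * Complex.I * (j:ℂ) * (x:ℂ)) := by
    have hsq : (fun t => F t ^ 2) = AddCircle.liftIoc 1 0 (fun x => g x ^ 2) :=
      funext (sq_lift g)
    rw [hsq, fourierCoeff_lift]
    refine intervalIntegral.integral_congr fun x _ => ?_
    congr 1
    push_cast
    ring
  rw [← hlhs, heq]
  have hmap : Finset.Icc (0:ℤ) (j:ℤ)
      = (Finset.range (j+1)).map ⟨(Nat.cast : ℕ → ℤ), Nat.cast_injective⟩ := by
    ext x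
    simp only [Finset.mem_Icc, Finset.mem_map, Finset.mem_range, Function.Embedding.coeFn_mk]
    constructor
    · rintro ⟨h0, hj⟩
      exact ⟨x.toNat, by omega, by omega⟩
    · rintro ⟨k, hk, rfl⟩
      omega
  rw [hmap, Finset.sum_map]
  refine Finset.sum_congr rfl fun k hk => ?_
  simp only [Function.Embedding.coeFn_mk]
  rw [Finset.mem_range] at hk
  have hjk : ((k:ℤ) - (j:ℤ)) = -(((j - k : ℕ) : ℤ)) := by omega
  rw [hjk, hgc, hgc, mul_comm]
  norm_cast
end

section
/- Let E and C be N×N real matrices, let M be the 2N×2N block matrix M = [[0, I],[E, 0]] (zero matrix and identity in the top row, E and zero in the bottom row), and for τ ∈ [0,T] write exp(Mτ) in N×N blocks as [[O₁₁(τ), O₁₂(τ)],[O₂₁(τ), O₂₂(τ)]]. Assume O₁₁(τ) + O₁₂(τ)C is invertible for every τ ∈ [0,T]. Then Ψ(τ) := (O₂₁(τ) + O₂₂(τ)C)(O₁₁(τ) + O₁₂(τ)C)^{−1} satisfies the matrix Riccati equation Ψ'(τ) = −Ψ(τ)Ψ(τ) + E for all τ ∈ [0,T], with initial value Ψ(0)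 = C. -/
open NormedSpace Matrix

attribute [local instance] Matrix.linftyOpNormedRing Matrix.linftyOpNormedAlgebra

namespace RiccatiAux

variable {N : ℕ}

/-- `A ↦ A₁₁ + A₁₂ * C` as a linear map on block matrices. -/
noncomputable def topComb (C : Matrix (Fin N) (Fin N) ℝ) :
    Matrix (Fin N ⊕ Fin N) (Fin N ⊕ Fin N) ℝ →ₗ[ℝ] Matrix (Fin N) (Fin N) ℝ where
  toFun A := A.toBlocks₁₁ + A.toBlocks₁₂ * C
  map_add' A B := by
    have h1 : (A + B).toBlocks₁₁ = A.toBlocks₁₁ + B.toBlocks₁₁ := rfl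
    have h2 : (A + B).toBlocks₁₂ = A.toBlocks₁₂ + B.toBlocks₁₂ := rfl
    simp only [h1, h2, Matrix.add_mul]
    abel
  map_smul' r A := by
    have h1 : (r • A).toBlocks₁₁ = r • A.toBlocks₁₁ := rfl
    have h2 : (r • A).toBlocks₁₂ = r • A.toBlocks₁₂ := rfl
    simp only [h1, h2, Matrix.smul_mul, RingHom.id_apply, smul_add]

/-- `A ↦ A₂₁ + A₂₂ * C` as a linear map on block matrices. -/
noncomputable def botComb (C : Matrix (Fin N) (Fin N) ℝ) :
    Matrix (Fin N ⊕ Fin N) (Fin N ⊕ Fin N) ℝ →ₗ[ℝ] Matrix (Fin N) (Fin N) ℝ where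
  toFun A := A.toBlocks₂₁ + A.toBlocks₂₂ * C
  map_add' A B := by
    have h1 : (A + B).toBlocks₂₁ = A.toBlocks₂₁ + B.toBlocks₂₁ := rfl
    have h2 : (A + B).toBlocks₂₂ = A.toBlocks₂₂ + B.toBlocks₂₂ := rfl
    simp only [h1, h2, Matrix.add_mul]
    abel
  map_smul' r A := by
    have h1 : (r • A).toBlocks₂₁ = r • A.toBlocks₂₁ := rfl
    have h2 : (r • A).toBlocks₂₂ = r • A.toBlocks₂₂ := rfl
    simp only [h1, h2, Matrix.smul_mul, RingHom.id_apply, smul_add]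

/-- entry evaluation as a linear map -/
noncomputable def entryLM (i j : Fin N) : Matrix (Fin N) (Fin N) ℝ →ₗ[ℝ] ℝ where
  toFun A := A i j
  map_add' A B := rfl
  map_smul' r A := rfl

end RiccatiAux

open RiccatiAux

/-- Let `M = [[0, I],[E, 0]]` be a `2N×2N` block matrix and write
`exp(Mτ) = [[O₁₁(τ), O₁₂(τ)],[O₂₁(τ), O₂₂(τ)]]` in `N×N` blocks. If `O₁₁(τ) + O₁₂(τ)C` is
invertible for every `τ ∈ [0,T]`, then `Ψ(τ) := (O₂₁(τ) + O₂₂(τ)C)(O₁₁(τ) + O₁₂(τ)C)⁻¹`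
satisfies the matrix Riccati equation `Ψ'(τ) = −Ψ(τ)Ψ(τ) + E` (entrywise derivative) on
`[0,T]`, with `Ψ(0) = C`. -/
theorem matrix_riccati_flow_solution
    (N : ℕ) (hN : 1 ≤ N) (T : ℝ) (hT : 0 < T)
    (E C : Matrix (Fin N) (Fin N) ℝ)
    (M : Matrix (Fin N ⊕ Fin N) (Fin N ⊕ Fin N) ℝ)
    (hM : M = Matrix.fromBlocks 0 1 E 0)
    (O₁₁ O₁₂ O₂₁ O₂₂ : ℝ → Matrix (Fin N) (Fin N) ℝ)
    (hO : ∀ τ : ℝ, NormedSpace.exp (τ • M) =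
      Matrix.fromBlocks (O₁₁ τ) (O₁₂ τ) (O₂₁ τ) (O₂₂ τ))
    (hinv : ∀ τ ∈ Set.Icc (0:ℝ) T, IsUnit (O₁₁ τ + O₁₂ τ * C)) :
    (∀ τ ∈ Set.Icc (0:ℝ) T, ∀ i j : Fin N,
      HasDerivWithinAt
        (fun s : ℝ => (((O₂₁ s + O₂₂ s * C) * (O₁₁ s + O₁₂ s * C)⁻¹ : Matrix (Fin N) (Fin N) ℝ)) i j)
        ((-(((O₂₁ τ + O₂₂ τ * C) * (O₁₁ τ + O₁₂ τ * C)⁻¹) *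
            ((O₂₁ τ + O₂₂ τ * C) * (O₁₁ τ + O₁₂ τ * C)⁻¹)) + E) i j)
        (Set.Icc (0:ℝ) T) τ) ∧
    (O₂₁ 0 + O₂₂ 0 * C) * (O₁₁ 0 + O₁₂ 0 * C)⁻¹ = C := by
  -- abbreviations
  set X : ℝ → Matrix (Fin N) (Fin N) ℝ := fun s => O₁₁ s + O₁₂ s * C with hX
  set Y : ℝ → Matrix (Fin N) (Fin N) ℝ := fun s => O₂₁ s + O₂₂ s * C with hY
  have hXg : ∀ s : ℝ, X s = topComb C (NormedSpace.exp (s • M)) := by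
    intro s; rw [hO s]; simp [topComb, hX]
  have hYg : ∀ s : ℝ, Y s = botComb C (NormedSpace.exp (s • M)) := by
    intro s; rw [hO s]; simp [botComb, hY]
  have key : ∀ τ ∈ Set.Icc (0:ℝ) T,
      HasDerivWithinAt (fun s : ℝ => Y s * (X s)⁻¹)
        (-(Y τ * (X τ)⁻¹ * (Y τ * (X τ)⁻¹)) + E) (Set.Icc (0:ℝ) T) τ := by
    intro τ hτ
    have hexp : HasDerivAt (fun s : ℝ => NormedSpace.exp (s • M))
        (M * NormedSpace.exp (τ • M)) τ := hasDerivAt_exp_smul_const' M τ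
    -- derivative of X
    have hXd : HasDerivAt X (Y τ) τ := by
      have h := ((topComb C).toContinuousLinearMap.hasFDerivAt).comp_hasDerivAt τ hexp
      have hfun : (⇑(LinearMap.toContinuousLinearMap (topComb C)) ∘ fun s : ℝ =>
          NormedSpace.exp (s • M)) = X := funext fun s => by
        simp [Function.comp, LinearMap.coe_toContinuousLinearMap', ← hXg]
      have h2 : (LinearMap.toContinuousLinearMap (topComb C)) (M * NormedSpace.exp (τ • M))
          = Y τ := by
        rw [LinearMap.coe_toContinuousLinearMap', hO τ, hM, Matrix.fromBlocks_multiply]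
        simp [topComb, hY]
      rw [hfun] at h
      exact h.congr_deriv h2
    have hYd : HasDerivAt Y (E * X τ) τ := by
      have h := ((botComb C).toContinuousLinearMap.hasFDerivAt).comp_hasDerivAt τ hexp
      have hfun : (⇑(LinearMap.toContinuousLinearMap (botComb C)) ∘ fun s : ℝ =>
          NormedSpace.exp (s • M)) = Y := funext fun s => by
        simp [Function.comp, LinearMap.coe_toContinuousLinearMap', ← hYg]
      have h2 : (LinearMap.toContinuousLinearMap (botComb C)) (M * NormedSpace.exp (τ • M))
          = E * X τ := by
        rw [LinearMap.coe_toContinuousLinearMap', hO τ, hM, Matrix.fromBlocks_multiply]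
        simp [botComb, hX, Matrix.mul_add, mul_assoc]
      rw [hfun] at h
      exact h.congr_deriv h2
    obtain ⟨u, hu⟩ := hinv τ hτ
    have hu' : (↑u : Matrix (Fin N) (Fin N) ℝ) = X τ := hu
    have huinv : (↑u⁻¹ : Matrix (Fin N) (Fin N) ℝ) = (X τ)⁻¹ := by
      rw [Matrix.nonsing_inv_eq_ringInverse, ← hu', Ring.inverse_unit]
    -- derivative of X⁻¹
    have hXinv : HasDerivWithinAt (fun s => (X s)⁻¹)
        (-((X τ)⁻¹ * Y τ * (X τ)⁻¹)) (Set.Icc (0:ℝ) T) τ := by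
      have hF : HasFDerivAt Ring.inverse
          (-(ContinuousLinearMap.mulLeftRight ℝ (Matrix (Fin N) (Fin N) ℝ)) ↑u⁻¹ ↑u⁻¹) (X τ) :=
        hu' ▸ hasFDerivAt_ringInverse (𝕜 := ℝ) u
      have hcomp := hF.comp_hasDerivWithinAt τ (hXd.hasDerivWithinAt (s := Set.Icc (0:ℝ) T))
      have hfun : (Ring.inverse ∘ X) = fun s => (X s)⁻¹ := by
        funext s; simp [Function.comp, Matrix.nonsing_inv_eq_ringInverse]
      rw [hfun] at hcomp
      simp only [huinv, ContinuousLinearMap.mulLeftRight_apply, ContinuousLinearMap.neg_apply] at hcomp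
      exact hcomp
    have hmul := (hYd.hasDerivWithinAt).mul hXinv
    have hXXinv : X τ * (X τ)⁻¹ = 1 := Matrix.mul_nonsing_inv _ ((Matrix.isUnit_iff_isUnit_det _).mp ⟨u, hu⟩)
    refine hmul.congr_deriv (Eq.symm ?_)
    rw [mul_neg, neg_add_eq_sub]
    rw [show E * X τ * (X τ)⁻¹ = E by rw [mul_assoc, hXXinv, mul_one]]
    rw [show Y τ * ((X τ)⁻¹ * Y τ * (X τ)⁻¹) = Y τ * (X τ)⁻¹ * (Y τ * (X τ)⁻¹) by
      noncomm_ring]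
    abel
  constructor
  · intro τ hτ i j
    have := ((entryLM i j).toContinuousLinearMap.hasFDerivAt).comp_hasDerivWithinAt τ (key τ hτ)
    simp only [entryLM] at this
    exact this
  · have h1 : NormedSpace.exp ((0:ℝ) • M) = 1 := by rw [zero_smul, NormedSpace.exp_zero]
    have h := (hO 0).symm.trans h1
    rw [← Matrix.fromBlocks_one] at h
    have e11 : O₁₁ 0 = 1 := congrArg Matrix.toBlocks₁₁ h
    have e12 : O₁₂ 0 = 0 := congrArg Matrix.toBlocks₁₂ h
    have e21 : O₂₁ 0 = 0 := congrArg Matrix.toBlocks₂₁ h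
    have e22 : O₂₂ 0 = 1 := congrArg Matrix.toBlocks₂₂ h
    rw [e11, e12, e21, e22]
    simp
end

section
/- Let ε ∈ ℝ, N ≥ 2, and let E be the N×N matrix with E_{ii} = ε for all i, E_{i+1,i} = −ε for i = 0,…,N−2, E_{0,N−1} = −ε, and all other entries zero. Let M be the 2N×2N block matrix M = [[0, I],[E, 0]]. Then for every λ ∈ ℂ, det(λ·I_{2N} − M) = (λ² − ε)^N − (−ε)^N. -/
open Matrix Equiv Finset
open Fin.NatCast

lemma perm_rotate {n : ℕ} (σ : Equiv.Perm (Fin (n+2)))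
    (h : ∀ i, σ i = i ∨ σ i = i + 1) (j : Fin (n+2)) (hj : σ j = j + 1) :
    ∀ i, σ i = i + 1 := by
  have key : ∀ k : ℕ, σ (j + (k : Fin (n+2))) = j + k + 1 := by
    intro k
    induction k with
    | zero => simpa using hj
    | succ k ih =>
      have hcast : ((k + 1 : ℕ) : Fin (n+2)) = (k : Fin (n+2)) + 1 := by push_cast; ring
      rw [hcast, ← add_assoc]
      rcases h (j + (k : Fin (n+2)) + 1) with hk | hk
      · exfalso
        have h2 : σ (j + (k : Fin (n+2))) = σ (j + (k : Fin (n+2)) + 1) := by rw [ih, hk]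
        have h3 := σ.injective h2
        have h4 : j + (k : Fin (n+2)) + 0 = j + (k : Fin (n+2)) + 1 := by
          rw [add_zero]; exact h3
        exact zero_ne_one (add_left_cancel h4)
      · exact hk
  intro i
  have := key (i - j).val
  rw [Fin.cast_val_eq_self, show j + (i - j) = i by abel] at this
  exact this

/-- Determinant of the cyclic two-diagonal matrix. -/
lemma cyc_det {n : ℕ} (x c : ℂ) (A : Matrix (Fin (n+2)) (Fin (n+2)) ℂ)
    (hA : ∀ i j, A i j = if i = j then x else if i = j + 1 then c else 0) :
    A.det = x ^ (n+2) - (-c) ^ (n+2) := by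
  have hne : (1 : Equiv.Perm (Fin (n+2))) ≠ finRotate (n+2) := by
    intro h
    have h0 : (1 : Equiv.Perm (Fin (n+2))) 0 = finRotate (n+2) 0 := by rw [h]
    simp only [Perm.coe_one, id_eq, finRotate_succ_apply, zero_add] at h0
    exact zero_ne_one h0
  rw [Matrix.det_apply']
  rw [← Finset.sum_subset (Finset.subset_univ ({1, finRotate (n+2)} :
      Finset (Equiv.Perm (Fin (n+2)))))]
  · rw [Finset.sum_pair hne]
    have t1 : ∀ i : Fin (n+2), A i i = x := fun i => by rw [hA]; simp
    have t2 : ∀ i : Fin (n+2), A (i+1) i = c := fun i => by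
      rw [hA]
      have : i + 1 ≠ i := by
        intro h
        have h4 : i + 1 = i + 0 := by rw [add_zero]; exact h
        exact one_ne_zero (add_left_cancel h4)
      simp [this]
    simp only [Perm.coe_one, id_eq, t1, finRotate_succ_apply, t2,
      Equiv.Perm.sign_one, Units.val_one, Int.cast_one, one_mul, sign_finRotate,
      Finset.prod_const, Finset.card_univ, Fintype.card_fin]
    have : ((((-1 : ℤˣ) ^ (n+2-1) : ℤˣ) : ℤ) : ℂ) = (-1 : ℂ) ^ (n+1) := by
      rw [show n+2-1 = n+1 by omega]; push_cast; ring
    rw [this]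
    ring
  · intro σ _ hσ
    simp only [Finset.mem_insert, Finset.mem_singleton] at hσ
    push_neg at hσ
    obtain ⟨h1, h2⟩ := hσ
    have hex : ∃ i, σ i ≠ i ∧ σ i ≠ i + 1 := by
      by_contra hc
      push_neg at hc
      by_cases hall : ∀ i, σ i = i
      · exact h1 (Equiv.ext hall)
      · push_neg at hall
        obtain ⟨j, hj⟩ := hall
        have hstep := perm_rotate σ
          (fun i => or_iff_not_imp_left.mpr (hc i)) j (hc j hj)
        exact h2 (Equiv.ext fun i => by rw [finRotate_succ_apply]; exact hstep i)
    obtain ⟨i, hi1, hi2⟩ := hex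
    have hzero : A (σ i) i = 0 := by rw [hA]; simp [hi1, hi2]
    exact mul_eq_zero_of_right _ (Finset.prod_eq_zero (Finset.mem_univ i) hzero)

/-- For the `N×N` matrix `E` with `E_{ii} = ε`, `E_{i+1,i} = −ε` (cyclically, i.e. also
`E_{0,N−1} = −ε`) and all other entries `0`, the `2N×2N` block matrix `M = [[0, I],[E, 0]]`
has characteristic polynomial `det(λ·I − M) = (λ² − ε)^N − (−ε)^N` over `ℂ`. -/
theorem block_matrix_charpoly
    (ε : ℝ) (N : ℕ) (hN : 2 ≤ N)
    (E : Matrix (Fin N) (Fin N) ℝ)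
    (hE : ∀ i j : Fin N, E i j =
      if (i : ℕ) = (j : ℕ) then ε
      else if (i : ℕ) = (j : ℕ) + 1 then -ε
      else if (i : ℕ) = 0 ∧ (j : ℕ) = N - 1 then -ε
      else 0)
    (M : Matrix (Fin N ⊕ Fin N) (Fin N ⊕ Fin N) ℝ)
    (hM : M = Matrix.fromBlocks 0 1 E 0) :
    ∀ lam : ℂ,
      Matrix.det (lam • (1 : Matrix (Fin N ⊕ Fin N) (Fin N ⊕ Fin N) ℂ)
          - M.map (fun r : ℝ => (r : ℂ)))
        = (lam ^ 2 - (ε : ℂ)) ^ N - (-(ε : ℂ)) ^ N := by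
  intro lam
  obtain ⟨n, rfl⟩ : ∃ n, N = n + 2 := ⟨N - 2, by omega⟩
  subst hM
  set E' : Matrix (Fin (n+2)) (Fin (n+2)) ℂ := E.map (fun r : ℝ => (r : ℂ)) with hE'def
  -- characterization of the cyclic successor relation
  have hadd : ∀ i j : Fin (n+2),
      (i = j + 1) ↔ ((i:ℕ) = (j:ℕ)+1 ∨ ((i:ℕ) = 0 ∧ (j:ℕ) = n+1)) := by
    intro i j
    rw [Fin.ext_iff, Fin.val_add_one]
    have hj := j.isLt
    have hi := i.isLt
    split_ifs with h
    · have hjv : (j:ℕ) = n+1 := by rw [h, Fin.val_last]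
      omega
    · have hjv : (j:ℕ) ≠ n+1 := fun hh => h (by
        rw [Fin.ext_iff, Fin.val_last]; exact hh)
      omega
  -- determinant of μ•1 - E'
  have hKdet : ∀ μ : ℂ,
      Matrix.det (μ • (1 : Matrix (Fin (n+2)) (Fin (n+2)) ℂ) - E')
        = (μ - (ε:ℂ)) ^ (n+2) - (-(ε:ℂ)) ^ (n+2) := by
    intro μ
    apply cyc_det (μ - (ε:ℂ)) (ε:ℂ)
    intro i j
    have hvij : (i = j) ↔ ((i:ℕ) = (j:ℕ)) := Fin.ext_iff
    simp only [Matrix.sub_apply, Matrix.smul_apply, Matrix.one_apply, smul_ite,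
      smul_eq_mul, mul_one, smul_zero, hE'def, Matrix.map_apply, hE i j]
    simp only [hadd i j, hvij]
    have hjlt := j.isLt
    have hilt := i.isLt
    split_ifs <;> first | (push_cast; ring1) | omega | (exfalso; omega)
  -- block form of the matrix
  have hblock : lam • (1 : Matrix (Fin (n+2) ⊕ Fin (n+2)) (Fin (n+2) ⊕ Fin (n+2)) ℂ)
      - (Matrix.fromBlocks 0 1 E 0).map (fun r : ℝ => (r : ℂ))
      = Matrix.fromBlocks (lam • 1) (-1) (-E') (lam • 1) := by
    ext i j
    rcases i with i | i <;> rcases j with j | j <;>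
      simp [Matrix.sub_apply, Matrix.smul_apply, Matrix.one_apply, Matrix.map_apply,
        Matrix.fromBlocks, hE'def, apply_ite (fun r : ℝ => (r : ℂ))]
  rw [hblock]
  rcases eq_or_ne lam 0 with rfl | hlam
  · -- lam = 0
    have h0 : (Matrix.fromBlocks ((0:ℂ) • 1) (-1) (-E') ((0:ℂ) • 1)
        : Matrix (Fin (n+2) ⊕ Fin (n+2)) (Fin (n+2) ⊕ Fin (n+2)) ℂ)
        = Matrix.fromBlocks 0 (-1) (-E') 0 := by rw [zero_smul]
    rw [h0]
    have hdetnegE' : Matrix.det (-E') = 0 := by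
      have := hKdet 0
      rw [zero_smul, zero_sub, zero_sub, sub_self] at this
      exact this
    have hdetE' : E'.det = 0 := by
      rw [Matrix.det_neg] at hdetnegE'
      simpa using hdetnegE'
    have hsq : (Matrix.fromBlocks (0 : Matrix (Fin (n+2)) (Fin (n+2)) ℂ) (-1) (-E') 0) *
        (Matrix.fromBlocks 0 (-1) (-E') 0) = Matrix.fromBlocks E' 0 0 E' := by
      rw [Matrix.fromBlocks_multiply]
      congr 1 <;> simp [Matrix.neg_mul, Matrix.mul_neg]
    have hd2 : (Matrix.det (Matrix.fromBlocks (0 : Matrix (Fin (n+2)) (Fin (n+2)) ℂ)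
        (-1) (-E') 0)) ^ 2 = 0 := by
      rw [sq, ← Matrix.det_mul, hsq, Matrix.det_fromBlocks_zero₂₁, hdetE', mul_zero]
    have := pow_eq_zero_iff (n := 2) (by norm_num) |>.mp hd2
    rw [this]
    norm_num
  · -- lam ≠ 0
    have hmul : (Matrix.fromBlocks (lam • 1) (-1) (-E') (lam • 1)) *
        (Matrix.fromBlocks (lam • (1 : Matrix (Fin (n+2)) (Fin (n+2)) ℂ))
          (0 : Matrix (Fin (n+2)) (Fin (n+2)) ℂ) E' (1 : Matrix (Fin (n+2)) (Fin (n+2)) ℂ))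
        = Matrix.fromBlocks (lam ^ 2 • 1 - E') (-1) 0 (lam • 1) := by
      rw [Matrix.fromBlocks_multiply]
      congr 1 <;>
        simp [Matrix.smul_mul, Matrix.mul_smul, smul_smul, Matrix.neg_mul, sq,
          sub_eq_add_neg]
    have hdet2 : Matrix.det (Matrix.fromBlocks (lam • (1 : Matrix (Fin (n+2)) (Fin (n+2)) ℂ))
        (0 : Matrix (Fin (n+2)) (Fin (n+2)) ℂ) E' (1 : Matrix (Fin (n+2)) (Fin (n+2)) ℂ))
        = lam ^ (n+2) := by
      rw [Matrix.det_fromBlocks_zero₁₂]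
      simp [Matrix.det_smul]
    have hdet3 : Matrix.det (Matrix.fromBlocks (lam ^ 2 • (1 : Matrix (Fin (n+2)) (Fin (n+2)) ℂ)
        - E') (-1 : Matrix (Fin (n+2)) (Fin (n+2)) ℂ) (0 : Matrix (Fin (n+2)) (Fin (n+2)) ℂ)
        (lam • (1 : Matrix (Fin (n+2)) (Fin (n+2)) ℂ))) = ((lam ^ 2 - (ε:ℂ)) ^ (n+2) - (-(ε:ℂ)) ^ (n+2)) * lam ^ (n+2) := by
      rw [Matrix.det_fromBlocks_zero₂₁, hKdet (lam ^ 2)]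
      simp [Matrix.det_smul]
    have hfinal := congrArg Matrix.det hmul
    rw [Matrix.det_mul, hdet2, hdet3] at hfinal
    exact mul_right_cancel₀ (pow_ne_zero _ hlam) hfinal
end

section
/- Let ε > 0, N ≥ 2, E the N×N matrix with E_{ii} = ε, E_{i+1,i} = −ε for i = 0,…,N−2, E_{0,N−1} = −ε, all other entries zero, and M the 2N×2N block matrix [[0, I],[E, 0]]. Then λ ∈ ℂ is an eigenvalue of M (as a complex matrix) if and only if λ² = ε·(1 − exp(2π√(−1) k / N)) for some k ∈ {0, 1, …, N−1}. In particular every eigenvalue λ of M satisfies |λ| ≤ √(2ε). -/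
open Matrix Complex

lemma aux_det (n : ℕ) (a b : ℂ) :
    Matrix.det (Matrix.of fun i j : Fin (n+2) =>
      if (i:ℕ) = (j:ℕ) then a else if (i:ℕ) = (j:ℕ)+1 then b
      else if (i:ℕ) = 0 ∧ (j:ℕ) = n+1 then b else 0)
      = a^(n+2) - (-b)^(n+2) := by
  set A : Matrix (Fin (n+2)) (Fin (n+2)) ℂ := Matrix.of fun i j : Fin (n+2) =>
      if (i:ℕ) = (j:ℕ) then a else if (i:ℕ) = (j:ℕ)+1 then b
      else if (i:ℕ) = 0 ∧ (j:ℕ) = n+1 then b else 0 with hA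
  rw [Matrix.det_succ_row_zero]
  have h0 : ∀ j : Fin (n+2), j ∉ ({0, Fin.last (n+1)} : Finset (Fin (n+2))) →
      (-1 : ℂ)^(j:ℕ) * A 0 j * (A.submatrix Fin.succ j.succAbove).det = 0 := by
    intro j hj
    simp only [Finset.mem_insert, Finset.mem_singleton] at hj
    push_neg at hj
    have h1 : (j:ℕ) ≠ 0 := fun h => hj.1 (Fin.ext h)
    have h2 : (j:ℕ) ≠ n+1 := fun h => hj.2 (Fin.ext h)
    have : A 0 j = 0 := by
      simp only [hA, Matrix.of_apply, Fin.val_zero]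
      rw [if_neg (fun h => h1 h.symm), if_neg (by omega), if_neg (by simp [h2])]
    rw [this]; ring
  rw [← Finset.sum_subset (Finset.subset_univ _) (fun x _ hx => h0 x hx)]
  rw [Finset.sum_pair (by exact fun h => by simpa using congrArg Fin.val h)]
  have hA00 : A 0 0 = a := by simp [hA]
  have hA0l : A 0 (Fin.last (n+1)) = b := by simp [hA, Fin.last]
  have hdet1 : (A.submatrix Fin.succ (Fin.succAbove 0)).det = a^(n+1) := by
    have htri : (A.submatrix Fin.succ (Fin.succAbove 0)).transpose.BlockTriangular id := by
      intro i j hij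
      simp only [id_eq] at hij
      rw [Fin.lt_iff_val_lt_val] at hij
      simp only [Matrix.transpose_apply, Matrix.submatrix_apply, hA, Matrix.of_apply]
      have : Fin.succAbove 0 i = i.succ := rfl
      rw [this]
      simp only [Fin.val_succ]
      split_ifs <;> first | omega | simp_all
    rw [← Matrix.det_transpose, Matrix.det_of_upperTriangular htri]
    have : ∀ i : Fin (n+1), (A.submatrix Fin.succ (Fin.succAbove 0)).transpose i i = a := by
      intro i
      simp [hA, Fin.succAbove]
    rw [Finset.prod_congr rfl (fun i _ => this i)]
    simp
  have hdet2 : (A.submatrix Fin.succ (Fin.succAbove (Fin.last (n+1)))).det = b^(n+1) := by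
    have htri : (A.submatrix Fin.succ (Fin.succAbove (Fin.last (n+1)))).BlockTriangular id := by
      intro i j hij
      simp only [id_eq] at hij
      rw [Fin.lt_iff_val_lt_val] at hij
      simp only [Matrix.submatrix_apply, hA, Matrix.of_apply]
      have : Fin.succAbove (Fin.last (n+1)) j = j.castSucc := Fin.succAbove_last_apply j
      rw [this]
      simp only [Fin.val_succ, show ((j.castSucc : Fin (n+2)) : ℕ) = (j:ℕ) from rfl]
      split_ifs <;> first | omega | simp_all
    rw [Matrix.det_of_upperTriangular htri]
    have : ∀ i : Fin (n+1), (A.submatrix Fin.succ (Fin.succAbove (Fin.last (n+1)))) i i = b := by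
      intro i
      simp [hA, Fin.succAbove_last_apply]
    rw [Finset.prod_congr rfl (fun i _ => this i)]
    simp
  rw [hA00, hA0l, hdet1, hdet2]
  simp only [Fin.val_zero, Fin.val_last, pow_zero]
  have : (-b)^(n+2) = (-1)^(n+1) * b^(n+1) * (-b) := by
    rw [pow_succ, neg_pow]
  rw [this]; ring


lemma det_block_eq (N : ℕ) (E' : Matrix (Fin N) (Fin N) ℂ) (lam : ℂ) (hlam : lam ≠ 0) :
    Matrix.det (Matrix.fromBlocks (lam • 1) (-1) (-E') (lam • (1 : Matrix (Fin N) (Fin N) ℂ)))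
      = Matrix.det (lam ^ 2 • 1 - E') := by
  letI : Invertible (lam • (1 : Matrix (Fin N) (Fin N) ℂ)) :=
    ⟨lam⁻¹ • 1,
     by rw [Matrix.smul_mul, Matrix.mul_smul, Matrix.one_mul, smul_smul,
        inv_mul_cancel₀ hlam, one_smul],
     by rw [Matrix.smul_mul, Matrix.mul_smul, Matrix.one_mul, smul_smul,
        mul_inv_cancel₀ hlam, one_smul]⟩
  rw [Matrix.det_fromBlocks₁₁]
  have hinv : (⅟(lam • (1 : Matrix (Fin N) (Fin N) ℂ))) = lam⁻¹ • 1 := rfl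
  rw [hinv]
  have h1 : (-E') * (lam⁻¹ • (1 : Matrix (Fin N) (Fin N) ℂ)) * (-1) = lam⁻¹ • E' := by
    rw [Matrix.mul_smul, Matrix.mul_one, Matrix.smul_mul, Matrix.neg_mul, Matrix.mul_neg,
      Matrix.mul_one, neg_neg]
  rw [h1]
  have h2 : lam ^ 2 • (1 : Matrix (Fin N) (Fin N) ℂ) - E'
      = lam • (lam • 1 - lam⁻¹ • E') := by
    rw [smul_sub, smul_smul, smul_smul, mul_inv_cancel₀ hlam, one_smul, sq]
  rw [h2, Matrix.det_smul, Matrix.det_smul, Matrix.det_one, mul_one]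


/-- For the `N×N` matrix `E` with `E_{ii} = ε`, `E_{i+1,i} = −ε` (cyclically, i.e. also
`E_{0,N−1} = −ε`) and all other entries `0`, and the `2N×2N` block matrix
`M = [[0, I],[E, 0]]` (regarded as a complex matrix), a complex number `λ` is an eigenvalue
of `M` (i.e. `det(λ·I − M) = 0`) if and only if `λ² = ε(1 − exp(2π√(−1)k/N))` for some
`k ∈ {0,…,N−1}`; in particular every eigenvalue satisfies `|λ| ≤ √(2ε)`. -/
theorem block_matrix_eigenvalues
    (ε : ℝ) (hε : 0 < ε) (N : ℕ) (hN : 2 ≤ N)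
    (E : Matrix (Fin N) (Fin N) ℝ)
    (hE : ∀ i j : Fin N, E i j =
      if (i : ℕ) = (j : ℕ) then ε
      else if (i : ℕ) = (j : ℕ) + 1 then -ε
      else if (i : ℕ) = 0 ∧ (j : ℕ) = N - 1 then -ε
      else 0)
    (M : Matrix (Fin N ⊕ Fin N) (Fin N ⊕ Fin N) ℝ)
    (hM : M = Matrix.fromBlocks 0 1 E 0) :
    ∀ lam : ℂ,
      (Matrix.det (lam • (1 : Matrix (Fin N ⊕ Fin N) (Fin N ⊕ Fin N) ℂ)
          - M.map (fun r : ℝ => (r : ℂ))) = 0 ↔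
        ∃ k : ℕ, k < N ∧
          lam ^ 2 = (ε : ℂ) * (1 - Complex.exp (2 * Real.pi * Complex.I * (k : ℂ) / (N : ℂ)))) ∧
      (Matrix.det (lam • (1 : Matrix (Fin N ⊕ Fin N) (Fin N ⊕ Fin N) ℂ)
          - M.map (fun r : ℝ => (r : ℂ))) = 0 →
        ‖lam‖ ≤ Real.sqrt (2 * ε)) := by
  obtain ⟨n, rfl⟩ : ∃ n, N = n + 2 := ⟨N - 2, by omega⟩
  have hε' : (ε : ℂ) ≠ 0 := by exact_mod_cast hε.ne'
  set E' : Matrix (Fin (n+2)) (Fin (n+2)) ℂ := E.map (fun r : ℝ => (r : ℂ)) with hE'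
  -- Step 1: block structure
  have hblock : ∀ lam : ℂ,
      lam • (1 : Matrix (Fin (n+2) ⊕ Fin (n+2)) (Fin (n+2) ⊕ Fin (n+2)) ℂ)
        - M.map (fun r : ℝ => (r : ℂ))
      = Matrix.fromBlocks (lam • 1) (-1) (-E') (lam • 1) := by
    intro lam
    rw [hM]
    ext i j
    cases i <;> cases j <;>
      simp [Matrix.fromBlocks, Matrix.one_apply, hE', Sum.elim_inl, Sum.elim_inr,
        Matrix.map_apply, apply_ite, Sum.inl.injEq, Sum.inr.injEq]
    all_goals split_ifs <;> tauto
  -- Step 2: entries of λ²·1 - E'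
  have hEntry : ∀ lam : ℂ,
      lam ^ 2 • (1 : Matrix (Fin (n+2)) (Fin (n+2)) ℂ) - E'
      = Matrix.of (fun i j : Fin (n+2) =>
          if (i:ℕ) = (j:ℕ) then (lam ^ 2 - (ε:ℂ)) else if (i:ℕ) = (j:ℕ)+1 then (ε:ℂ)
          else if (i:ℕ) = 0 ∧ (j:ℕ) = n+1 then (ε:ℂ) else 0) := by
    intro lam
    ext i j
    have hcast : (n + 2 : ℕ) - 1 = n + 1 := rfl
    simp only [Matrix.sub_apply, Matrix.smul_apply, Matrix.one_apply, hE', Matrix.map_apply,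
      Matrix.of_apply, hE i j, hcast, Fin.ext_iff, apply_ite (fun r : ℝ => (r : ℂ)),
      Complex.ofReal_neg, Complex.ofReal_zero, smul_eq_mul]
    split_ifs <;> ring
  -- Step 3: determinant formula for all λ by continuity
  have hdet : ∀ lam : ℂ,
      Matrix.det (lam • (1 : Matrix (Fin (n+2) ⊕ Fin (n+2)) (Fin (n+2) ⊕ Fin (n+2)) ℂ)
        - M.map (fun r : ℝ => (r : ℂ)))
      = (lam ^ 2 - (ε:ℂ)) ^ (n+2) - (-(ε:ℂ)) ^ (n+2) := by
    have hcont1 : Continuous (fun lam : ℂ =>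
        Matrix.det (lam • (1 : Matrix (Fin (n+2) ⊕ Fin (n+2)) (Fin (n+2) ⊕ Fin (n+2)) ℂ)
          - M.map (fun r : ℝ => (r : ℂ)))) := by
      apply Continuous.matrix_det
      exact (continuous_id.smul continuous_const).sub continuous_const
    have hcont2 : Continuous (fun lam : ℂ =>
        (lam ^ 2 - (ε:ℂ)) ^ (n+2) - (-(ε:ℂ)) ^ (n+2)) := by fun_prop
    have heq : Set.EqOn (fun lam : ℂ =>
        Matrix.det (lam • (1 : Matrix (Fin (n+2) ⊕ Fin (n+2)) (Fin (n+2) ⊕ Fin (n+2)) ℂ)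
          - M.map (fun r : ℝ => (r : ℂ))))
        (fun lam : ℂ => (lam ^ 2 - (ε:ℂ)) ^ (n+2) - (-(ε:ℂ)) ^ (n+2)) ({(0:ℂ)}ᶜ) :=
      fun lam (hlam : lam ≠ 0) => by
      show Matrix.det _ = _
      rw [hblock lam, det_block_eq _ _ _ hlam, hEntry lam, aux_det n (lam ^ 2 - (ε:ℂ)) (ε:ℂ)]
    exact fun lam => congrFun (Continuous.ext_on (dense_compl_singleton (0:ℂ))
      hcont1 hcont2 heq) lam
  intro lam
  -- the iff
  have hiff : Matrix.det (lam • (1 : Matrix (Fin (n+2) ⊕ Fin (n+2)) (Fin (n+2) ⊕ Fin (n+2)) ℂ)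
          - M.map (fun r : ℝ => (r : ℂ))) = 0 ↔
        ∃ k : ℕ, k < n + 2 ∧
          lam ^ 2 = (ε : ℂ) * (1 - Complex.exp (2 * Real.pi * Complex.I * (k : ℂ) / ((n+2 : ℕ) : ℂ))) := by
    rw [hdet lam, sub_eq_zero]
    constructor
    · intro h
      set x : ℂ := ((ε:ℂ) - lam ^ 2) / ε with hx
      have hxpow : x ^ (n+2) = 1 := by
        rw [hx, div_pow]
        have h1 : ((ε:ℂ) - lam ^ 2) ^ (n+2) = (ε:ℂ) ^ (n+2) := by
          have h2 : (ε:ℂ) - lam ^ 2 = (-1) * (lam ^ 2 - ε) := by ring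
          rw [h2, mul_pow, h, ← mul_pow]
          norm_num
        rw [h1, div_self (pow_ne_zero _ hε')]
      haveI : NeZero (n+2) := ⟨by omega⟩
      obtain ⟨k, hk, hke⟩ :=
        (Complex.isPrimitiveRoot_exp (n+2) (by omega)).eq_pow_of_pow_eq_one hxpow
      refine ⟨k, hk, ?_⟩
      have hω : Complex.exp (2 * Real.pi * Complex.I / ((n+2 : ℕ) : ℂ)) ^ k
          = Complex.exp (2 * Real.pi * Complex.I * (k : ℂ) / ((n+2 : ℕ) : ℂ)) := by
        rw [← Complex.exp_nat_mul]
        congr 1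
        push_cast
        ring
      rw [hω] at hke
      have hxval : (ε:ℂ) * x = (ε:ℂ) - lam ^ 2 := by
        rw [hx, mul_div_cancel₀ _ hε']
      rw [hke]
      linear_combination hxval
    · rintro ⟨k, hk, hlam2⟩
      have he : (Complex.exp (2 * Real.pi * Complex.I * (k : ℂ) / ((n+2 : ℕ) : ℂ))) ^ (n+2) = 1 := by
        rw [← Complex.exp_nat_mul]
        have hne : ((n+2 : ℕ) : ℂ) ≠ 0 := Nat.cast_ne_zero.mpr (by omega)
        have harg : ((n+2 : ℕ) : ℂ) * (2 * Real.pi * Complex.I * (k : ℂ) / ((n+2 : ℕ) : ℂ))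
            = (k : ℂ) * (2 * Real.pi * Complex.I) := by
          rw [mul_comm, div_mul_cancel₀ _ hne]
          ring
        rw [harg, Complex.exp_nat_mul, Complex.exp_two_pi_mul_I, one_pow]
      have h1 : lam ^ 2 - (ε:ℂ)
          = (-(ε:ℂ)) * Complex.exp (2 * Real.pi * Complex.I * (k : ℂ) / ((n+2 : ℕ) : ℂ)) := by
        rw [hlam2]; ring
      rw [h1, mul_pow, he, mul_one]
  refine ⟨hiff, fun h => ?_⟩
  obtain ⟨k, hk, h2⟩ := hiff.mp h
  set e : ℂ := Complex.exp (2 * Real.pi * Complex.I * (k : ℂ) / ((n+2 : ℕ) : ℂ)) with hedef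
  have habs_e : ‖e‖ = 1 := by
    have : (2 * Real.pi * Complex.I * (k : ℂ) / ((n+2 : ℕ) : ℂ))
        = ((2 * Real.pi * k / (n+2) : ℝ) : ℂ) * Complex.I := by
      push_cast
      ring
    rw [hedef, this, Complex.norm_exp_ofReal_mul_I]
  have hsq : ‖lam‖ ^ 2 ≤ 2 * ε := by
    have h3 : ‖lam‖ ^ 2 = ‖lam ^ 2‖ := (norm_pow lam 2).symm
    rw [h3, h2, norm_mul]
    have h4 : ‖((ε:ℂ))‖ = ε := by
      rw [Complex.norm_real, Real.norm_eq_abs, abs_of_pos hε]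
    rw [h4]
    have h5 : ‖1 - e‖ ≤ 2 := by
      have h := norm_sub_le (1:ℂ) e
      rw [habs_e] at h
      simp only [norm_one] at h
      linarith
    nlinarith [norm_nonneg (1 - e)]
  exact (Real.le_sqrt (norm_nonneg lam) (by positivity)).mpr hsq
end

section
/- Let ϕ = (ϕ^k)_{k∈ℕ} be a solution of the infinite Riccati system satisfying sup_{k∈ℕ} sup_{0 ≤ t ≤ T} |ϕ^k(t)| < ∞. For z ∈ ℂ with |z| < 1 define the generating function S_t(z) := Σ_{k=0}^{∞} z^k ϕ^k(t). Then for each such z the series converges absolutely, the function t ↦ S_t(z) is differentiable on [0,T] with (d/dt) S_t(z) = (S_t(z))² − ε (1 − z), and S_T(z) = c (1 − z). -/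
open scoped BigOperators
open MeasureTheory

private lemma ofReal_hasDerivWithinAt {f : ℝ → ℝ} {u x : ℝ} {s : Set ℝ}
    (hf : HasDerivWithinAt f u s x) :
    HasDerivWithinAt (fun y : ℝ => ((f y : ℂ))) ((u : ℂ)) s x := by
  exact hf.ofReal_comp

/-- If `ϕ` is a uniformly bounded solution of the infinite Riccati system, then for every
`z ∈ ℂ` with `|z| < 1` the generating function `S_t(z) := ∑_{k=0}^∞ z^k ϕ^k(t)` converges
absolutely, is differentiable in `t` with `(d/dt) S_t(z) = (S_t(z))² − ε(1 − z)`, and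
satisfies `S_T(z) = c(1 − z)`. -/
theorem generating_function_riccati
    (T ε c : ℝ) (hT : 0 < T) (hε : 0 < ε) (hc : 0 ≤ c)
    (ϕ : ℕ → ℝ → ℝ) (hϕ : IsInfRiccatiSol T ε c ϕ)
    (hbd : ∃ B : ℝ, ∀ k : ℕ, ∀ t ∈ Set.Icc (0:ℝ) T, |ϕ k t| ≤ B) :
    ∀ z : ℂ, ‖z‖ < 1 →
      (∀ t ∈ Set.Icc (0:ℝ) T, Summable (fun k : ℕ => ‖z ^ k * (ϕ k t : ℂ)‖)) ∧
      (∀ t ∈ Set.Icc (0:ℝ) T,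
        HasDerivWithinAt (fun s : ℝ => ∑' k : ℕ, z ^ k * (ϕ k s : ℂ))
          ((∑' k : ℕ, z ^ k * (ϕ k t : ℂ)) ^ 2 - (ε : ℂ) * (1 - z))
          (Set.Icc (0:ℝ) T) t) ∧
      (∑' k : ℕ, z ^ k * (ϕ k T : ℂ)) = (c : ℂ) * (1 - z) := by
  obtain ⟨B₀, hB₀⟩ := hbd
  set B : ℝ := max B₀ 0 with hBdef
  have hB : ∀ k : ℕ, ∀ t ∈ Set.Icc (0:ℝ) T, |ϕ k t| ≤ B :=
    fun k t ht => (hB₀ k t ht).trans (le_max_left _ _)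
  have hBnn : (0:ℝ) ≤ B := le_max_right _ _
  obtain ⟨hderiv, hϕ0, hϕ1, hϕ2⟩ := hϕ
  intro z hz
  set r : ℝ := ‖z‖ with hrdef
  have hr0 : 0 ≤ r := norm_nonneg z
  have hr1 : r < 1 := hz
  have hTicc : T ∈ Set.Icc (0:ℝ) T := ⟨hT.le, le_rfl⟩
  -- continuity of each ϕ k
  have hcont : ∀ k, ContinuousOn (ϕ k) (Set.Icc 0 T) :=
    fun k t ht => (hderiv k t ht).continuousWithinAt
  -- absolute convergence
  have hsumF : ∀ t ∈ Set.Icc (0:ℝ) T,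
      Summable (fun k : ℕ => ‖z ^ k * (ϕ k t : ℂ)‖) := by
    intro t ht
    refine Summable.of_nonneg_of_le (fun k => norm_nonneg _) (fun k => ?_)
      ((summable_geometric_of_lt_one hr0 hr1).mul_right B)
    rw [norm_mul, norm_pow, Complex.norm_real, Real.norm_eq_abs]
    exact mul_le_mul_of_nonneg_left (hB k t ht) (pow_nonneg hr0 k)
  have hFsum : ∀ t ∈ Set.Icc (0:ℝ) T, Summable (fun k : ℕ => z ^ k * (ϕ k t : ℂ)) := by
    intro t ht
    refine Summable.of_norm ?_
    simpa using hsumF t ht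
  -- terminal condition
  have hterm : (∑' k : ℕ, z ^ k * (ϕ k T : ℂ)) = (c : ℂ) * (1 - z) := by
    have h0 : ∀ k ∉ Finset.range 2, z ^ k * (ϕ k T : ℂ) = 0 := by
      intro k hk
      simp only [Finset.mem_range, not_lt] at hk
      rw [hϕ2 k hk]
      simp
    rw [tsum_eq_sum h0]
    rw [Finset.sum_range_succ, Finset.sum_range_succ, Finset.sum_range_zero, hϕ0, hϕ1]
    push_cast
    ring
  refine ⟨hsumF, ?_, hterm⟩
  -- the derivative term of the k-th summand
  set g : ℕ → ℝ → ℂ := fun k s =>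
    z ^ k * (((∑ j ∈ Finset.range (k+1), ϕ j s * ϕ (k-j) s : ℝ) : ℂ) - ((epsN ε k : ℝ) : ℂ))
    with hgdef
  set u : ℕ → ℝ := fun k => r ^ k * (((k : ℝ) + 1) * B ^ 2 + ε) with hudef
  have hu_nonneg : ∀ k, 0 ≤ u k := by
    intro k
    apply mul_nonneg (pow_nonneg hr0 k)
    positivity
  have hu : Summable u := by
    have h1 : Summable (fun k : ℕ => (k : ℝ) * r ^ k) := by
      simpa using summable_pow_mul_geometric_of_norm_lt_one 1
        (by rwa [Real.norm_eq_abs, abs_of_nonneg hr0] : ‖r‖ < 1)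
    have h2 : Summable (fun k : ℕ => r ^ k) := summable_geometric_of_lt_one hr0 hr1
    refine ((h1.mul_right (B ^ 2)).add (h2.mul_right (B ^ 2 + ε))).congr (fun k => ?_)
    simp only [hudef]
    ring
  -- bound on g
  have hgu : ∀ k, ∀ s ∈ Set.Icc (0:ℝ) T, ‖g k s‖ ≤ u k := by
    intro k s hs
    have hA : |∑ j ∈ Finset.range (k+1), ϕ j s * ϕ (k-j) s| ≤ ((k : ℝ) + 1) * B ^ 2 := by
      calc |∑ j ∈ Finset.range (k+1), ϕ j s * ϕ (k-j) s|
          ≤ ∑ j ∈ Finset.range (k+1), |ϕ j s * ϕ (k-j) s| := Finset.abs_sum_le_sum_abs _ _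
        _ ≤ ∑ _j ∈ Finset.range (k+1), B ^ 2 := by
            refine Finset.sum_le_sum (fun j _ => ?_)
            rw [abs_mul, sq]
            exact mul_le_mul (hB j s hs) (hB (k-j) s hs) (abs_nonneg _) hBnn
        _ = ((k : ℝ) + 1) * B ^ 2 := by
            rw [Finset.sum_const, Finset.card_range, nsmul_eq_mul]
            push_cast
            ring
    have heps : |epsN ε k| ≤ ε := by
      simp only [epsN]
      split_ifs <;> simp [abs_of_nonneg hε.le, hε.le]
    rw [hgdef]
    simp only
    rw [norm_mul, norm_pow, ← Complex.ofReal_sub, Complex.norm_real, Real.norm_eq_abs]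
    refine mul_le_mul_of_nonneg_left ?_ (pow_nonneg hr0 k)
    calc |∑ j ∈ Finset.range (k+1), ϕ j s * ϕ (k-j) s - epsN ε k|
        ≤ |∑ j ∈ Finset.range (k+1), ϕ j s * ϕ (k-j) s| + |epsN ε k| := abs_sub _ _
      _ ≤ ((k : ℝ) + 1) * B ^ 2 + ε := add_le_add hA heps
  -- each summand has derivative g k
  have hgderiv : ∀ k, ∀ t ∈ Set.Icc (0:ℝ) T,
      HasDerivWithinAt (fun s : ℝ => z ^ k * (ϕ k s : ℂ)) (g k t) (Set.Icc 0 T) t := by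
    intro k t ht
    have h1 := ofReal_hasDerivWithinAt (hderiv k t ht)
    have h2 := h1.const_mul (z ^ k)
    refine h2.congr_deriv ?_
    rw [hgdef]
    push_cast
    ring
  -- g k is continuous on Icc
  have hgcont : ∀ k, ContinuousOn (g k) (Set.Icc (0:ℝ) T) := by
    intro k
    have hA : ContinuousOn (fun s => (∑ j ∈ Finset.range (k+1), ϕ j s * ϕ (k-j) s : ℝ))
        (Set.Icc (0:ℝ) T) := by
      apply continuousOn_finset_sum
      exact fun j _ => (hcont j).mul (hcont (k-j))
    exact continuousOn_const.mul
      ((Complex.continuous_ofReal.comp_continuousOn hA).sub continuousOn_const)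
  -- G = sum of the g k
  set G : ℝ → ℂ := fun s => ∑' k, g k s with hGdef
  have hGcont : ContinuousOn G (Set.Icc (0:ℝ) T) := by
    refine continuousOn_tsum hgcont hu (fun n x hx => ?_)
    simpa using hgu n x hx
  -- identify G with S² - ε(1-z)
  have hG_eq : ∀ t ∈ Set.Icc (0:ℝ) T,
      G t = (∑' k : ℕ, z ^ k * (ϕ k t : ℂ)) ^ 2 - (ε : ℂ) * (1 - z) := by
    intro t ht
    have hnorm : Summable (fun k : ℕ => ‖z ^ k * (ϕ k t : ℂ)‖) := by
      simpa using hsumF t ht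
    have hcp : ∀ n : ℕ,
        ∑ k ∈ Finset.range (n+1), (z ^ k * (ϕ k t : ℂ)) * (z ^ (n-k) * (ϕ (n-k) t : ℂ))
          = z ^ n * ((∑ j ∈ Finset.range (n+1), ϕ j t * ϕ (n-j) t : ℝ) : ℂ) := by
      intro n
      push_cast
      rw [Finset.mul_sum]
      refine Finset.sum_congr rfl (fun k hk => ?_)
      have hkn : k ≤ n := Nat.lt_succ_iff.mp (Finset.mem_range.mp hk)
      rw [show (z ^ k * (ϕ k t : ℂ)) * (z ^ (n-k) * (ϕ (n-k) t : ℂ))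
          = (z ^ k * z ^ (n-k)) * ((ϕ k t : ℂ) * (ϕ (n-k) t : ℂ)) by ring,
        ← pow_add, Nat.add_sub_cancel' hkn]
      try ring
    have hsq : (∑' k : ℕ, z ^ k * (ϕ k t : ℂ)) ^ 2
        = ∑' n : ℕ, z ^ n * ((∑ j ∈ Finset.range (n+1), ϕ j t * ϕ (n-j) t : ℝ) : ℂ) := by
      rw [sq, tsum_mul_tsum_eq_tsum_sum_range_of_summable_norm hnorm hnorm]
      exact tsum_congr hcp
    have h1 : Summable (fun n : ℕ =>
        z ^ n * ((∑ j ∈ Finset.range (n+1), ϕ j t * ϕ (n-j) t : ℝ) : ℂ)) :=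
      ((summable_norm_sum_mul_range_of_summable_norm hnorm hnorm).of_norm).congr hcp
    have h2 : Summable (fun n : ℕ => z ^ n * ((epsN ε n : ℝ) : ℂ)) := by
      refine summable_of_ne_finset_zero (s := Finset.range 2) (fun n hn => ?_)
      simp only [Finset.mem_range, not_lt] at hn
      have h0 : n ≠ 0 := by omega
      have h1' : n ≠ 1 := by omega
      simp [epsN, h0, h1']
    have heps : (∑' n : ℕ, z ^ n * ((epsN ε n : ℝ) : ℂ)) = (ε : ℂ) * (1 - z) := by
      have h0 : ∀ n ∉ Finset.range 2, z ^ n * ((epsN ε n : ℝ) : ℂ) = 0 := by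
        intro n hn
        simp only [Finset.mem_range, not_lt] at hn
        have h0 : n ≠ 0 := by omega
        have h1' : n ≠ 1 := by omega
        simp [epsN, h0, h1']
      rw [tsum_eq_sum h0, Finset.sum_range_succ, Finset.sum_range_succ, Finset.sum_range_zero]
      simp [epsN]
      ring
    calc G t = ∑' n : ℕ, (z ^ n * ((∑ j ∈ Finset.range (n+1), ϕ j t * ϕ (n-j) t : ℝ) : ℂ)
            - z ^ n * ((epsN ε n : ℝ) : ℂ)) := by
          refine tsum_congr (fun n => ?_)
          rw [hgdef]
          ring
      _ = (∑' n : ℕ, z ^ n * ((∑ j ∈ Finset.range (n+1), ϕ j t * ϕ (n-j) t : ℝ) : ℂ))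
            - ∑' n : ℕ, z ^ n * ((epsN ε n : ℝ) : ℂ) := Summable.tsum_sub h1 h2
      _ = (∑' k : ℕ, z ^ k * (ϕ k t : ℂ)) ^ 2 - (ε : ℂ) * (1 - z) := by rw [← hsq, heps]
  -- FTC for each k
  have hftc : ∀ t ∈ Set.Icc (0:ℝ) T, ∀ k,
      ∫ s in t..T, g k s = z ^ k * (ϕ k T : ℂ) - z ^ k * (ϕ k t : ℂ) := by
    intro t ht k
    have hsub : Set.Icc t T ⊆ Set.Icc (0:ℝ) T := Set.Icc_subset_Icc ht.1 le_rfl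
    refine intervalIntegral.integral_eq_sub_of_hasDeriv_right_of_le (f := fun s => z ^ k * (ϕ k s : ℂ)) (f' := g k) ht.2 ?_ ?_ ?_
    · refine ContinuousOn.mono ?_ hsub
      exact continuousOn_const.mul (Complex.continuous_ofReal.comp_continuousOn (hcont k))
    · intro x hx
      have hx0 : (0:ℝ) < x := lt_of_le_of_lt ht.1 hx.1
      have hx' : x ∈ Set.Icc (0:ℝ) T := ⟨hx0.le, hx.2.le⟩
      have hnb : Set.Icc (0:ℝ) T ∈ nhds x := Icc_mem_nhds hx0 hx.2
      exact ((hgderiv k x hx').hasDerivAt hnb).hasDerivWithinAt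
    · refine ContinuousOn.intervalIntegrable ?_
      rw [Set.uIcc_of_le ht.2]
      exact (hgcont k).mono hsub
  -- swap sum and integral
  have hswap : ∀ t ∈ Set.Icc (0:ℝ) T, ∫ s in t..T, G s = ∑' k, ∫ s in t..T, g k s := by
    intro t ht
    have hsub : Set.Ioc t T ⊆ Set.Icc (0:ℝ) T :=
      (Set.Ioc_subset_Icc_self).trans (Set.Icc_subset_Icc ht.1 le_rfl)
    have hmeas : ∀ k, AEStronglyMeasurable (g k) (volume.restrict (Set.Ioc t T)) := by
      intro k
      exact ContinuousOn.aestronglyMeasurable ((hgcont k).mono hsub) measurableSet_Ioc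
    have hlint : (∑' k, ∫⁻ s in Set.Ioc t T, ‖g k s‖₊ ∂volume) ≠ ⊤ := by
      have hbd1 : ∀ k, (∫⁻ s in Set.Ioc t T, ‖g k s‖₊ ∂volume)
          ≤ ENNReal.ofReal (u k) * ENNReal.ofReal (T - t) := by
        intro k
        calc (∫⁻ s in Set.Ioc t T, ‖g k s‖₊ ∂volume)
            ≤ ∫⁻ _s in Set.Ioc t T, ENNReal.ofReal (u k) ∂volume := by
              refine setLIntegral_mono measurable_const (fun s hs => ?_)
              rw [← ENNReal.ofReal_coe_nnreal, coe_nnnorm]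
              refine ENNReal.ofReal_le_ofReal ?_
              simpa using hgu k s (hsub hs)
          _ = ENNReal.ofReal (u k) * volume (Set.Ioc t T) := setLIntegral_const _ _
          _ = ENNReal.ofReal (u k) * ENNReal.ofReal (T - t) := by rw [Real.volume_Ioc]
      refine ne_top_of_le_ne_top ?_ (ENNReal.tsum_le_tsum hbd1)
      rw [ENNReal.tsum_mul_right, ← ENNReal.ofReal_tsum_of_nonneg hu_nonneg hu]
      exact ENNReal.mul_ne_top ENNReal.ofReal_ne_top ENNReal.ofReal_ne_top
    have key : ∫ s in Set.Ioc t T, G s ∂volume = ∑' k, ∫ s in Set.Ioc t T, g k s ∂volume :=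
      integral_tsum hmeas hlint
    rw [intervalIntegral.integral_of_le ht.2, key]
    exact tsum_congr (fun k => (intervalIntegral.integral_of_le ht.2).symm)
  -- integral representation of S
  have hS : ∀ t ∈ Set.Icc (0:ℝ) T,
      (∑' k : ℕ, z ^ k * (ϕ k t : ℂ)) = (∑' k : ℕ, z ^ k * (ϕ k T : ℂ)) - ∫ s in t..T, G s := by
    intro t ht
    rw [hswap t ht]
    have h1 : (∑' k, ∫ s in t..T, g k s)
        = ∑' k, (z ^ k * (ϕ k T : ℂ) - z ^ k * (ϕ k t : ℂ)) := tsum_congr (hftc t ht)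
    rw [h1, Summable.tsum_sub (hFsum T hTicc) (hFsum t ht)]
    ring
  -- G is interval integrable on subintervals of [0,T]
  have hGint : ∀ a ∈ Set.Icc (0:ℝ) T, ∀ b ∈ Set.Icc (0:ℝ) T, IntervalIntegrable G volume a b := by
    intro a ha b hb
    refine ContinuousOn.intervalIntegrable (hGcont.mono ?_)
    intro x hx
    rcases le_total a b with h | h
    · rw [Set.uIcc_of_le h] at hx
      exact ⟨le_trans ha.1 hx.1, le_trans hx.2 hb.2⟩
    · rw [Set.uIcc_of_ge h] at hx
      exact ⟨le_trans hb.1 hx.1, le_trans hx.2 ha.2⟩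
  -- final: derivative of S
  intro t ht
  haveI : Fact (t ∈ Set.Icc (0:ℝ) T) := ⟨ht⟩
  have hmeasG : StronglyMeasurableAtFilter G (nhdsWithin t (Set.Icc (0:ℝ) T)) volume :=
    ⟨Set.Icc 0 T, self_mem_nhdsWithin, hGcont.aestronglyMeasurable measurableSet_Icc⟩
  have hprim : HasDerivWithinAt (fun x => ∫ s in (0:ℝ)..x, G s) (G t) (Set.Icc (0:ℝ) T) t :=
    intervalIntegral.integral_hasDerivWithinAt_right (hGint 0 (Set.left_mem_Icc.2 hT.le) t ht)
      hmeasG (hGcont t ht)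
  have hconst : HasDerivWithinAt
      (fun x => ((∑' k : ℕ, z ^ k * (ϕ k T : ℂ)) - ∫ s in (0:ℝ)..T, G s) + ∫ s in (0:ℝ)..x, G s)
      (G t) (Set.Icc (0:ℝ) T) t := hprim.const_add _
  have hfun_eq : ∀ y ∈ Set.Icc (0:ℝ) T,
      (∑' k : ℕ, z ^ k * (ϕ k y : ℂ))
        = ((∑' k : ℕ, z ^ k * (ϕ k T : ℂ)) - ∫ s in (0:ℝ)..T, G s) + ∫ s in (0:ℝ)..y, G s := by
    intro y hy
    have hadj : (∫ s in (0:ℝ)..y, G s) + ∫ s in y..T, G s = ∫ s in (0:ℝ)..T, G s :=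
      intervalIntegral.integral_add_adjacent_intervals
        (hGint 0 (Set.left_mem_Icc.2 hT.le) y hy) (hGint y hy T hTicc)
    rw [hS y hy, ← hadj]
    ring
  have hfinal := hconst.congr hfun_eq (hfun_eq t ht)
  rw [hG_eq t ht] at hfinal
  exact hfinal
end
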